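/- arXiv:1102.3280 — 6 statements merged into one kernel-verified Lean document; each statement's English description precedes it below -/
import Mathlib

section
/- Let N ≥ 1, let â : ℝ^N → ℝ, and let c₀ > 0. Suppose that for every t > 0 there exists a continuous integrable function G_t : ℝ^N → ℂ whose support is contained in the closed ball of radius c₀·t centered at the origin and whose Fourier transform satisfies 𝓕G_t(k) = exp(−â(k)·t) for all k ∈ ℝ^N. Then â extends to an entire function on ℂ^N: there exists a function A : ℂ^N → ℂ, complex-differentiable on all of ℂ^N, such that A(k) = â(k) for every k ∈ ℝ^N (viewing ℝ^N ⊆ ℂ^N coordinate-wise). -/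
open MeasureTheory
open scoped RealInnerProductSpace

/-- The Fourier transform `𝓕f(k) = (2π)^{-N/2} ∫ e^{i k·x} f(x) dx` used in the paper. -/
noncomputable def paperFourier {N : ℕ} (f : EuclideanSpace ℝ (Fin N) → ℂ)
    (k : EuclideanSpace ℝ (Fin N)) : ℂ :=
  (((2 * Real.pi) ^ (-(N : ℝ) / 2) : ℝ) : ℂ) *
    ∫ x : EuclideanSpace ℝ (Fin N), Complex.exp (Complex.I * (⟪k, x⟫ : ℝ)) * f x

namespace PW

noncomputable def T (N : ℕ) (x : EuclideanSpace ℝ (Fin N)) : (Fin N → ℂ) →L[ℂ] ℂ :=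
  ∑ j, (x j : ℂ) • ContinuousLinearMap.proj j

lemma T_apply {N : ℕ} (x : EuclideanSpace ℝ (Fin N)) (z : Fin N → ℂ) :
    T N x z = ∑ j, (x j : ℂ) * z j := by
  simp [T, ContinuousLinearMap.sum_apply, smul_eq_mul]

lemma coord_le_norm {N : ℕ} (x : EuclideanSpace ℝ (Fin N)) (j : Fin N) :
    |x j| ≤ ‖x‖ := by
  rw [EuclideanSpace.norm_eq, ← Real.sqrt_sq_eq_abs]
  refine Real.sqrt_le_sqrt ?_
  simpa using Finset.single_le_sum (f := fun i => (x i)^2)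
    (fun i _ => sq_nonneg (x i)) (Finset.mem_univ j)

lemma T_norm_le {N : ℕ} (x : EuclideanSpace ℝ (Fin N)) : ‖T N x‖ ≤ N * ‖x‖ := by
  refine ContinuousLinearMap.opNorm_le_bound _ (by positivity) fun z => ?_
  rw [T_apply]
  calc ‖∑ j, (x j : ℂ) * z j‖ ≤ ∑ j, ‖(x j : ℂ) * z j‖ := norm_sum_le _ _
    _ ≤ ∑ _j : Fin N, ‖x‖ * ‖z‖ := by
        refine Finset.sum_le_sum fun j _ => ?_
        rw [norm_mul, Complex.norm_real]
        exact mul_le_mul (coord_le_norm x j) (norm_le_pi_norm z j) (norm_nonneg _)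
          (norm_nonneg _)
    _ = N * ‖x‖ * ‖z‖ := by simp [Finset.sum_const, mul_assoc]

lemma T_cont {N : ℕ} : Continuous fun x : EuclideanSpace ℝ (Fin N) => T N x := by
  refine continuous_finset_sum _ fun j _ => ?_
  exact ((Complex.continuous_ofReal.comp (EuclideanSpace.proj j).continuous).smul
    continuous_const)

variable {N : ℕ} {Y : Type} [NormedAddCommGroup Y] [NormedSpace ℂ Y]

/-- The Fourier-type transform of `g` with complex frequency. -/
noncomputable def Phi (g : EuclideanSpace ℝ (Fin N) → Y) (z : Fin N → ℂ) : Y :=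
  ∫ x, Complex.exp (Complex.I * T N x z) • g x

/-- The "derivative weight". -/
noncomputable def Dg (g : EuclideanSpace ℝ (Fin N) → Y) (x : EuclideanSpace ℝ (Fin N)) :
    (Fin N → ℂ) →L[ℂ] Y :=
  (Complex.I • T N x).smulRight (g x)

lemma Dg_zero {g : EuclideanSpace ℝ (Fin N) → Y} {x} (hx : g x = 0) : Dg g x = 0 := by
  rw [Dg, hx]
  ext v
  simp

lemma Dg_norm (g : EuclideanSpace ℝ (Fin N) → Y) (x : EuclideanSpace ℝ (Fin N)) :
    ‖Dg g x‖ ≤ (N * ‖x‖) * ‖g x‖ := by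
  rw [Dg, ContinuousLinearMap.norm_smulRight_apply]
  refine mul_le_mul ?_ le_rfl (norm_nonneg _) (by positivity)
  refine ContinuousLinearMap.opNorm_le_bound _ (by positivity) fun z => ?_
  rw [ContinuousLinearMap.smul_apply]
  calc ‖Complex.I • T N x z‖ = ‖T N x z‖ := by simp [norm_smul]
    _ ≤ ‖T N x‖ * ‖z‖ := (T N x).le_opNorm z
    _ ≤ N * ‖x‖ * ‖z‖ := by have := T_norm_le x; gcongr

lemma Dg_meas {g : EuclideanSpace ℝ (Fin N) → Y} (hg : AEStronglyMeasurable g volume) :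
    AEStronglyMeasurable (Dg g) volume := by
  have h1 : Continuous fun p : ((Fin N → ℂ) →L[ℂ] ℂ) × Y => p.1.smulRight p.2 :=
    isBoundedBilinearMap_smulRight.continuous
  have h2 : Continuous fun x : EuclideanSpace ℝ (Fin N) => Complex.I • T N x :=
    (T_cont (N := N)).const_smul Complex.I
  exact h1.comp_aestronglyMeasurable (h2.aestronglyMeasurable.prodMk hg)

lemma Dg_integrable {g : EuclideanSpace ℝ (Fin N) → Y} (hg : Integrable g)
    {R : ℝ} (hsupp : ∀ x, g x ≠ 0 → ‖x‖ ≤ R) : Integrable (Dg g) := by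
  refine ((hg.norm.const_mul (N * R)).mono' (Dg_meas hg.1) ?_)
  refine Filter.Eventually.of_forall fun x => ?_
  by_cases hx : g x = 0
  · simp [Dg_zero hx, hx]
  · calc ‖Dg g x‖ ≤ (N * ‖x‖) * ‖g x‖ := Dg_norm g x
      _ ≤ N * R * ‖g x‖ := by
          have hxR := hsupp x hx
          gcongr


lemma T_cont_apply {N : ℕ} (z : Fin N → ℂ) :
    Continuous fun x : EuclideanSpace ℝ (Fin N) => T N x z := by
  simp only [T_apply]
  exact continuous_finset_sum _ fun j _ =>
    (Complex.continuous_ofReal.comp (EuclideanSpace.proj j).continuous).mul continuous_const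

lemma exp_norm_le {N : ℕ} (x : EuclideanSpace ℝ (Fin N)) (z : Fin N → ℂ) :
    ‖Complex.exp (Complex.I * T N x z)‖ ≤ Real.exp (‖T N x‖ * ‖z‖) := by
  rw [Complex.norm_exp]
  refine Real.exp_le_exp.mpr ?_
  have h1 : (Complex.I * T N x z).re = -(T N x z).im := by simp
  rw [h1]
  calc -(T N x z).im ≤ |(T N x z).im| := neg_le_abs _
    _ ≤ ‖T N x z‖ := Complex.abs_im_le_norm _
    _ = ‖T N x z‖ := rfl
    _ ≤ ‖T N x‖ * ‖z‖ := (T N x).le_opNorm z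

lemma hasFDerivAt_term {N : ℕ} (g : EuclideanSpace ℝ (Fin N) → Y)
    (x : EuclideanSpace ℝ (Fin N)) (z₀ : Fin N → ℂ) :
    HasFDerivAt (fun z => Complex.exp (Complex.I * T N x z) • g x)
      (Complex.exp (Complex.I * T N x z₀) • Dg g x) z₀ := by
  have h1 : HasFDerivAt (fun z : Fin N → ℂ => Complex.I * T N x z)
      (Complex.I • T N x) z₀ := (T N x).hasFDerivAt.const_mul Complex.I
  have h3 := h1.cexp.smul_const (g x)
  refine h3.congr_fderiv ?_
  ext v
  simp [Dg, ContinuousLinearMap.smulRight_apply, smul_smul, mul_comm, mul_assoc, mul_left_comm]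

lemma hasFDerivAt_Phi [CompleteSpace Y] {g : EuclideanSpace ℝ (Fin N) → Y}
    (hg : Integrable g) {R : ℝ} (hR : 0 ≤ R)
    (hsupp : ∀ x, g x ≠ 0 → ‖x‖ ≤ R) (z₀ : Fin N → ℂ) :
    HasFDerivAt (Phi g) (Phi (Dg g) z₀) z₀ := by
  classical
  set C : ℝ := Real.exp ((N * R) * (‖z₀‖ + 1)) * (N * R) with hC
  have hC0 : 0 ≤ C := by positivity
  -- measurability of the integrand for every z
  have hmeas : ∀ z : Fin N → ℂ,
      AEStronglyMeasurable (fun x => Complex.exp (Complex.I * T N x z) • g x) volume := by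
    intro z
    exact ((Complex.continuous_exp.comp (continuous_const.mul (T_cont_apply z))).aestronglyMeasurable).smul hg.1
  -- operator norm bound on the ball
  have hTbound : ∀ x, g x ≠ 0 → ‖T N x‖ ≤ N * R := by
    intro x hx
    refine (T_norm_le x).trans ?_
    have := hsupp x hx
    gcongr
  have hbound : ∀ z ∈ Metric.ball z₀ 1, ∀ x,
      ‖Complex.exp (Complex.I * T N x z) • Dg g x‖ ≤ C * ‖g x‖ := by
    intro z hz x
    by_cases hx : g x = 0
    · simp [Dg_zero hx, hx]
    · have hz' : ‖z‖ ≤ ‖z₀‖ + 1 := by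
        have h := mem_ball_iff_norm.mp hz
        have : ‖z‖ ≤ ‖z₀‖ + ‖z - z₀‖ := by
          simpa [add_comm] using norm_add_le (z - z₀) z₀
        linarith
      have h1 : ‖Complex.exp (Complex.I * T N x z) • Dg g x‖
          = ‖Complex.exp (Complex.I * T N x z)‖ * ‖Dg g x‖ :=
        norm_smul (α := ℂ) (β := (Fin N → ℂ) →L[ℂ] Y) _ _
      rw [h1, hC]
      have h2 : ‖Complex.exp (Complex.I * T N x z)‖ ≤ Real.exp ((N * R) * (‖z₀‖ + 1)) := by
        refine (exp_norm_le x z).trans (Real.exp_le_exp.mpr ?_)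
        have := hTbound x hx
        have h3 : (0:ℝ) ≤ ‖z‖ := norm_nonneg _
        have h4 : (0:ℝ) ≤ ‖T N x‖ := norm_nonneg _
        nlinarith
      have h5 : ‖Dg g x‖ ≤ (N * R) * ‖g x‖ := by
        refine (Dg_norm g x).trans ?_
        have := hsupp x hx
        gcongr
      calc ‖Complex.exp (Complex.I * T N x z)‖ * ‖Dg g x‖
          ≤ Real.exp ((N * R) * (‖z₀‖ + 1)) * ((N * R) * ‖g x‖) :=
            mul_le_mul h2 h5 (norm_nonneg _) (by positivity)
        _ = Real.exp ((N * R) * (‖z₀‖ + 1)) * (N * R) * ‖g x‖ := by ring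
  have main := hasFDerivAt_integral_of_dominated_loc_of_lip
    (F := fun z x => Complex.exp (Complex.I * T N x z) • g x)
    (F' := fun x => Complex.exp (Complex.I * T N x z₀) • Dg g x)
    (bound := fun x => C * ‖g x‖) (μ := volume) (x₀ := z₀)
    (Metric.ball_mem_nhds z₀ zero_lt_one)
    (Filter.Eventually.of_forall fun z => hmeas z)
    ?hint ?h'meas ?hlip (hg.norm.const_mul C)
    (Filter.Eventually.of_forall fun x => hasFDerivAt_term g x z₀)
  case hint =>
    refine (hg.norm.const_mul (Real.exp ((N * R) * (‖z₀‖ + 1)))).mono' (hmeas z₀) ?_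
    refine Filter.Eventually.of_forall fun x => ?_
    by_cases hx : g x = 0
    · simp [hx]
    · have h1 : ‖Complex.exp (Complex.I * T N x z₀) • g x‖
          = ‖Complex.exp (Complex.I * T N x z₀)‖ * ‖g x‖ := norm_smul _ _
      rw [h1]
      refine mul_le_mul ?_ le_rfl (norm_nonneg _) (by positivity)
      refine (exp_norm_le x z₀).trans (Real.exp_le_exp.mpr ?_)
      have := hTbound x hx
      have h3 : (0:ℝ) ≤ ‖z₀‖ := norm_nonneg _
      have h4 : (0:ℝ) ≤ ‖T N x‖ := norm_nonneg _
      nlinarith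
  case h'meas =>
    exact ((Complex.continuous_exp.comp
      (continuous_const.mul (T_cont_apply z₀))).aestronglyMeasurable).smul (Dg_meas hg.1)
  case hlip =>
    refine Filter.Eventually.of_forall fun x => ?_
    by_cases hx : g x = 0
    · have hzero : (fun z : Fin N → ℂ => Complex.exp (Complex.I * T N x z) • g x)
          = fun _ => (0 : Y) := by
        funext z; simp [hx]
      rw [hzero]
      intro a _ b _
      simp
    · refine Convex.lipschitzOnWith_of_nnnorm_hasFDerivWithin_le
        (f' := fun z => Complex.exp (Complex.I * T N x z) • Dg g x)
        (fun z _ => (hasFDerivAt_term g x z).hasFDerivWithinAt) (fun z hz => ?_)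
        (convex_ball z₀ 1)
      rw [← NNReal.coe_le_coe]
      calc (‖Complex.exp (Complex.I * T N x z) • Dg g x‖₊ : ℝ)
          = ‖Complex.exp (Complex.I * T N x z) • Dg g x‖ := rfl
        _ ≤ C * ‖g x‖ := hbound z hz x
        _ ≤ |C * ‖g x‖| := le_abs_self _
        _ = (Real.nnabs (C * ‖g x‖) : ℝ) := by rw [Real.coe_nnabs]
  exact main.2

lemma Dg_supp {g : EuclideanSpace ℝ (Fin N) → Y} {R : ℝ}
    (hsupp : ∀ x, g x ≠ 0 → ‖x‖ ≤ R) : ∀ x, Dg g x ≠ 0 → ‖x‖ ≤ R := by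
  intro x hx
  refine hsupp x fun h0 => hx (Dg_zero h0)

lemma differentiable_Phi [CompleteSpace Y] {g : EuclideanSpace ℝ (Fin N) → Y}
    (hg : Integrable g) {R : ℝ} (hR : 0 ≤ R)
    (hsupp : ∀ x, g x ≠ 0 → ‖x‖ ≤ R) : Differentiable ℂ (Phi g) :=
  fun z => (hasFDerivAt_Phi hg hR hsupp z).differentiableAt

lemma fderiv_Phi [CompleteSpace Y] {g : EuclideanSpace ℝ (Fin N) → Y}
    (hg : Integrable g) {R : ℝ} (hR : 0 ≤ R)
    (hsupp : ∀ x, g x ≠ 0 → ‖x‖ ≤ R) : fderiv ℂ (Phi g) = Phi (Dg g) :=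
  funext fun z => (hasFDerivAt_Phi hg hR hsupp z).fderiv

lemma contDiffOne_Phi [CompleteSpace Y] {g : EuclideanSpace ℝ (Fin N) → Y}
    (hg : Integrable g) {R : ℝ} (hR : 0 ≤ R)
    (hsupp : ∀ x, g x ≠ 0 → ‖x‖ ≤ R) : ContDiff ℂ 1 (Phi g) := by
  refine contDiff_one_iff_fderiv.mpr ⟨differentiable_Phi hg hR hsupp, ?_⟩
  rw [fderiv_Phi hg hR hsupp]
  exact (differentiable_Phi (Dg_integrable hg hsupp) hR (Dg_supp hsupp)).continuous

lemma one_var_zero {f : ℂ → ℂ} (hf : Differentiable ℂ f) (h0 : ∀ x : ℝ, f x = 0) :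
    ∀ z, f z = 0 := by
  have ha : AnalyticOnNhd ℂ f Set.univ := hf.differentiableOn.analyticOnNhd isOpen_univ
  have ht : Filter.Tendsto (fun n : ℕ => (((1:ℝ)/(n+1) : ℝ) : ℂ)) Filter.atTop
      (nhdsWithin 0 {(0:ℂ)}ᶜ) := by
    refine tendsto_nhdsWithin_of_tendsto_nhds_of_eventually_within _ ?_ ?_
    · have h1 : Filter.Tendsto (fun n : ℕ => ((1:ℝ)/(n+1) : ℝ)) Filter.atTop (nhds 0) :=
        tendsto_one_div_add_atTop_nhds_zero_nat
      have := (Complex.continuous_ofReal.tendsto 0).comp h1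
      simpa [Function.comp_def] using this
    · refine Filter.Eventually.of_forall fun n => ?_
      simp only [Set.mem_compl_iff, Set.mem_singleton_iff]
      intro hc
      have : ((1:ℝ)/(n+1) : ℝ) = 0 := by exact_mod_cast hc
      have hpos : (0:ℝ) < 1/(n+1) := by positivity
      linarith
  have hfreq : ∃ᶠ z in nhdsWithin 0 {(0:ℂ)}ᶜ, f z = 0 :=
    ht.frequently (Filter.Eventually.of_forall fun n => h0 _).frequently
  intro z
  exact ha.eqOn_zero_of_preconnected_of_frequently_eq_zero isPreconnected_univ
    (Set.mem_univ 0) hfreq (Set.mem_univ z)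

lemma multi_var_zero {N : ℕ} {f : (Fin N → ℂ) → ℂ} (hf : Differentiable ℂ f)
    (h0 : ∀ k : Fin N → ℝ, f (fun j => (k j : ℂ)) = 0) : ∀ z, f z = 0 := by
  suffices H : ∀ m : ℕ, ∀ z : Fin N → ℂ, (∀ i : Fin N, m ≤ (i : ℕ) → (z i).im = 0) → f z = 0 by
    intro z
    exact H N z fun i hi => absurd hi (by have := i.isLt; omega)
  intro m
  induction m with
  | zero =>
    intro z hz
    have hzz : (fun j => (((fun j => (z j).re) j : ℝ) : ℂ)) = z := by
      funext j
      have : (z j).im = 0 := hz j (Nat.zero_le _)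
      apply Complex.ext <;> simp [this]
    rw [← hzz]
    exact h0 _
  | succ m ih =>
    intro z hz
    by_cases hm : m < N
    · set j : Fin N := ⟨m, hm⟩ with hj
      have hupd : (Function.update z j : ℂ → (Fin N → ℂ))
          = fun w i => if i = j then w else z i := by
        funext w i
        simp [Function.update_apply]
      have hφ : Differentiable ℂ (fun w => f (Function.update z j w)) := by
        refine hf.comp ?_
        rw [hupd]
        refine differentiable_pi.mpr fun i => ?_
        by_cases h : i = j
        · simpa [h] using differentiable_id
        · simpa [h] using differentiable_const (z i)
      have hreal : ∀ x : ℝ, f (Function.update z j (x:ℂ)) = 0 := by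
        intro x
        refine ih (Function.update z j (x:ℂ)) fun i hi => ?_
        rcases eq_or_ne i j with rfl | hij
        · simp
        · rw [Function.update_of_ne hij]
          refine hz i ?_
          have h1 : (i:ℕ) ≠ m := fun hh => hij (Fin.ext (by simp [hj, hh]))
          omega
      have := one_var_zero hφ hreal (z j)
      simpa [Function.update_eq_self] using this
    · exact ih z fun i hi => absurd hi (by have := i.isLt; omega)

lemma no_zero_of_roots {φ : ℂ → ℂ} (hφ : Differentiable ℂ φ) (hφ0 : φ 0 ≠ 0)
    (hroots : ∀ n : ℕ, 1 ≤ n → ∃ ψ : ℂ → ℂ, Differentiable ℂ ψ ∧ ∀ w, (ψ w)^n = φ w) :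
    φ 1 ≠ 0 := by
  intro hz
  have hA : AnalyticAt ℂ φ 1 := hφ.analyticAt 1
  have hnotop : analyticOrderAt φ 1 ≠ ⊤ := by
    intro htop
    have hev : ∀ᶠ w in nhds 1, φ w = 0 := analyticOrderAt_eq_top.mp htop
    have : φ 0 = 0 := by
      have honhd : AnalyticOnNhd ℂ φ Set.univ := hφ.differentiableOn.analyticOnNhd isOpen_univ
      exact honhd.eqOn_zero_of_preconnected_of_eventuallyEq_zero isPreconnected_univ
        (Set.mem_univ 1) hev (Set.mem_univ 0)
    exact hφ0 this
  set m : ℕ := (analyticOrderAt φ 1).toNat with hmdef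
  have hm : analyticOrderAt φ 1 = (m : ℕ∞) := (ENat.coe_toNat hnotop).symm
  obtain ⟨ψ, hψdiff, hψn⟩ := hroots (m+1) (by omega)
  have hψ1 : ψ 1 = 0 := by
    have : (ψ 1)^(m+1) = 0 := by rw [hψn 1, hz]
    exact pow_eq_zero_iff (Nat.succ_ne_zero m) |>.mp this
  have hAψ : AnalyticAt ℂ ψ 1 := hψdiff.analyticAt 1
  have hψnotop : analyticOrderAt ψ 1 ≠ ⊤ := by
    intro htop
    have hev : ∀ᶠ w in nhds 1, ψ w = 0 := analyticOrderAt_eq_top.mp htop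
    have hev2 : ∀ᶠ w in nhds 1, φ w = 0 := by
      filter_upwards [hev] with w hw
      rw [← hψn w, hw]
      simp
    exact hnotop (analyticOrderAt_eq_top.mpr hev2)
  set p : ℕ := (analyticOrderAt ψ 1).toNat with hpdef
  have hp : analyticOrderAt ψ 1 = (p : ℕ∞) := (ENat.coe_toNat hψnotop).symm
  have hp1 : 1 ≤ p := by
    rcases Nat.eq_zero_or_pos p with h0 | h1
    · obtain ⟨g, hganal, hg0, hgeq⟩ := (hAψ.analyticOrderAt_eq_natCast (n := 0)).mp (by rw [hp, h0])
      have := hgeq.self_of_nhds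
      simp only [sub_self, pow_zero, one_smul] at this
      exact absurd (this ▸ hψ1) hg0
    · exact h1
  obtain ⟨g, hganal, hg0, hgeq⟩ := (hAψ.analyticOrderAt_eq_natCast (n := p)).mp hp
  have hrep : ∀ᶠ w in nhds 1, φ w = (w - 1)^((m+1)*p) • ((g w)^(m+1)) := by
    filter_upwards [hgeq] with w hw
    rw [← hψn w, hw]
    simp only [smul_eq_mul]
    rw [mul_pow, ← pow_mul, mul_comm p (m+1)]
  have horder : analyticOrderAt φ 1 = (((m+1)*p : ℕ) : ℕ∞) :=
    (hA.analyticOrderAt_eq_natCast).mpr ⟨fun w => (g w)^(m+1), hganal.pow _, pow_ne_zero _ hg0, hrep⟩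
  have : m = (m+1)*p := by
    have := hm.symm.trans horder
    exact_mod_cast this
  nlinarith

end PW

set_option maxHeartbeats 1000000 in
/-- If for every `t > 0` there is a continuous integrable fundamental solution `G t`
supported in the closed ball of radius `c₀ t` whose Fourier transform is
`exp (-â(k) t)`, then `â` extends to an entire function on `ℂ^N`. -/
theorem stmt_1 (N : ℕ) (hN : 1 ≤ N) (ahat : EuclideanSpace ℝ (Fin N) → ℝ)
    (c₀ : ℝ) (hc₀ : 0 < c₀)
    (h : ∀ t : ℝ, 0 < t → ∃ G : EuclideanSpace ℝ (Fin N) → ℂ,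
      Continuous G ∧ Integrable G ∧
      tsupport G ⊆ Metric.closedBall (0 : EuclideanSpace ℝ (Fin N)) (c₀ * t) ∧
      ∀ k : EuclideanSpace ℝ (Fin N),
        paperFourier G k = Complex.exp (-(ahat k * t))) :
    ∃ A : (Fin N → ℂ) → ℂ, Differentiable ℂ A ∧
      ∀ k : EuclideanSpace ℝ (Fin N), A (fun j => (k j : ℂ)) = (ahat k : ℂ) := by
  classical
  set cN : ℝ := (2 * Real.pi) ^ (-(N : ℝ) / 2) with hcN
  -- Step 0: package the hypothesis in terms of `PW.Phi`.
  have pick : ∀ t : ℝ, 0 < t → ∃ g : EuclideanSpace ℝ (Fin N) → ℂ,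
      Integrable g ∧ (∀ x, g x ≠ 0 → ‖x‖ ≤ c₀ * t) ∧
      ∀ k : EuclideanSpace ℝ (Fin N),
        PW.Phi g (fun j => (k j : ℂ)) = Complex.exp (-(ahat k * t)) := by
    intro t ht
    obtain ⟨G, hGc, hGi, hGs, hGf⟩ := h t ht
    refine ⟨fun x => (cN : ℂ) * G x, hGi.const_mul _, ?_, ?_⟩
    · intro x hx
      have hGx : G x ≠ 0 := fun h0 => hx (by simp [h0])
      have hx1 : x ∈ tsupport G := subset_tsupport G hGx
      have := hGs hx1
      simpa [Metric.mem_closedBall, dist_zero_right] using this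
    · intro k
      rw [← hGf k, paperFourier]
      have hT : ∀ x : EuclideanSpace ℝ (Fin N),
          PW.T N x (fun j => (k j : ℂ)) = ((⟪k, x⟫ : ℝ) : ℂ) := by
        intro x
        rw [PW.T_apply, PiLp.inner_apply]
        push_cast
        rw [Finset.sum_congr rfl]
        intro j _
        simp [mul_comm]
      simp only [PW.Phi, hT, smul_eq_mul]
      have : ∀ x : EuclideanSpace ℝ (Fin N),
          Complex.exp (Complex.I * ((⟪k, x⟫ : ℝ) : ℂ)) * ((cN : ℂ) * G x)
          = (cN : ℂ) * (Complex.exp (Complex.I * ((⟪k, x⟫ : ℝ) : ℂ)) * G x) := by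
        intro x; ring
      simp only [this]
      rw [MeasureTheory.integral_const_mul, ← hcN]
  choose gg hgInt hgSupp hgFour using pick
  -- The entire extension of `exp (-ahat ·)`.
  set F : (Fin N → ℂ) → ℂ := PW.Phi (gg 1 one_pos) with hFdef
  have hR1 : (0:ℝ) ≤ c₀ * 1 := by positivity
  have hFreal : ∀ k : EuclideanSpace ℝ (Fin N),
      F (fun j => (k j : ℂ)) = Complex.exp (-(ahat k * 1)) := hgFour 1 one_pos
  have hFdiff : Differentiable ℂ F :=
    PW.differentiable_Phi (hgInt 1 one_pos) hR1 (hgSupp 1 one_pos)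
  have hFC1 : ContDiff ℂ 1 F := PW.contDiffOne_Phi (hgInt 1 one_pos) hR1 (hgSupp 1 one_pos)
  have hVdef : fderiv ℂ F = PW.Phi (PW.Dg (gg 1 one_pos)) :=
    PW.fderiv_Phi (hgInt 1 one_pos) hR1 (hgSupp 1 one_pos)
  have hVC1 : ContDiff ℂ 1 (fderiv ℂ F) := by
    rw [hVdef]
    exact PW.contDiffOne_Phi (PW.Dg_integrable (hgInt 1 one_pos) (hgSupp 1 one_pos)) hR1
      (PW.Dg_supp (hgSupp 1 one_pos))
  -- F never vanishes
  have hzero_coe : (fun j => (((0 : EuclideanSpace ℝ (Fin N)) j : ℝ) : ℂ)) = (0 : Fin N → ℂ) := by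
    funext j; simp
  have hFne : ∀ z, F z ≠ 0 := by
    intro z₀
    have hφdiff : Differentiable ℂ (fun w : ℂ => F (w • z₀)) :=
      hFdiff.comp (differentiable_id.smul_const z₀)
    have hφ0 : F ((0:ℂ) • z₀) ≠ 0 := by
      rw [zero_smul, ← hzero_coe, hFreal 0]
      exact Complex.exp_ne_zero _
    have hroots : ∀ n : ℕ, 1 ≤ n → ∃ ψ : ℂ → ℂ, Differentiable ℂ ψ ∧
        ∀ w, (ψ w)^n = F (w • z₀) := by
      intro n hn
      have hnpos : (0:ℝ) < 1 / n := by positivity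
      set Fn : (Fin N → ℂ) → ℂ := PW.Phi (gg (1/n) hnpos) with hFn
      have hRn : (0:ℝ) ≤ c₀ * (1/n) := by positivity
      have hFndiff : Differentiable ℂ Fn :=
        PW.differentiable_Phi (hgInt _ hnpos) hRn (hgSupp _ hnpos)
      have hpow : ∀ z, (Fn z)^n = F z := by
        have hz := PW.multi_var_zero (f := fun z => (Fn z)^n - F z)
          ((hFndiff.pow n).sub hFdiff) ?_
        · intro z
          have := hz z
          simp only [sub_eq_zero] at this
          exact this
        · intro k
          rw [show (fun j => ((k j : ℝ) : ℂ)) = (fun j => (((WithLp.toLp 2 k : EuclideanSpace ℝ (Fin N)) j : ℝ) : ℂ)) from rfl,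
            hFn, hgFour _ hnpos (WithLp.toLp 2 k), hFreal (WithLp.toLp 2 k), ← Complex.exp_nat_mul, sub_eq_zero]
          congr 1
          have hn0 : (n:ℂ) ≠ 0 := Nat.cast_ne_zero.mpr (by omega)
          push_cast
          field_simp
      exact ⟨fun w => Fn (w • z₀), hFndiff.comp (differentiable_id.smul_const z₀),
        fun w => hpow (w • z₀)⟩
    have := PW.no_zero_of_roots hφdiff hφ0 hroots
    simpa using this
  -- The logarithmic-derivative integrand
  set B : (Fin N → ℂ) × (Fin N → ℂ) → ℂ :=
    fun p => (F p.1)⁻¹ * (fderiv ℂ F p.1 p.2) with hBdef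
  have hBC1 : ContDiff ℂ 1 B := by
    have h1 : ContDiff ℂ 1 fun p : (Fin N → ℂ) × (Fin N → ℂ) => F p.1 :=
      hFC1.comp contDiff_fst
    have h2 : ContDiff ℂ 1 fun p : (Fin N → ℂ) × (Fin N → ℂ) => fderiv ℂ F p.1 :=
      hVC1.comp contDiff_fst
    exact (h1.inv fun p => hFne p.1).mul (h2.clm_apply contDiff_snd)
  -- the linear map z ↦ (s • z, z)
  set L : ℝ → (Fin N → ℂ) →L[ℂ] ((Fin N → ℂ) × (Fin N → ℂ)) := fun s =>
    (s : ℂ) • (ContinuousLinearMap.id ℂ (Fin N → ℂ)).prod 0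
      + (0 : (Fin N → ℂ) →L[ℂ] (Fin N → ℂ)).prod (ContinuousLinearMap.id ℂ (Fin N → ℂ))
    with hLdef
  have hL_apply : ∀ (s : ℝ) (z : Fin N → ℂ), L s z = ((s:ℂ) • z, z) := by
    intro s z
    simp [hLdef, Prod.ext_iff]
  have hL_norm : ∀ s : ℝ, 0 ≤ s → s ≤ 1 → ‖L s‖ ≤ 1 := by
    intro s hs0 hs1
    refine ContinuousLinearMap.opNorm_le_bound _ zero_le_one fun z => ?_
    rw [hL_apply, Prod.norm_def]
    have h1 : ‖(s:ℂ) • z‖ ≤ ‖z‖ := by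
      rw [norm_smul (α := ℂ) (β := Fin N → ℂ), Complex.norm_real]
      calc |s| * ‖z‖ ≤ 1 * ‖z‖ := by
            refine mul_le_mul_of_nonneg_right ?_ (norm_nonneg _)
            rw [abs_of_nonneg hs0]; exact hs1
        _ = ‖z‖ := one_mul _
    simp only [max_le_iff]
    constructor
    · linarith
    · linarith [norm_nonneg z]
  have hDeriv : ∀ (s : ℝ) (z : Fin N → ℂ),
      HasFDerivAt (fun z : Fin N → ℂ => B ((s:ℂ) • z, z))
        ((fderiv ℂ B ((s:ℂ) • z, z)).comp (L s)) z := by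
    intro s z
    have h1 : HasFDerivAt B (fderiv ℂ B ((s:ℂ) • z, z)) ((s:ℂ) • z, z) :=
      ((hBC1.differentiable one_ne_zero) _).hasFDerivAt
    have heq : (fun z : Fin N → ℂ => (((s:ℂ) • z, z) : (Fin N → ℂ) × (Fin N → ℂ)))
        = fun z => L s z := funext fun z => (hL_apply s z).symm
    have h2 : HasFDerivAt (fun z : Fin N → ℂ => (((s:ℂ) • z, z) : (Fin N → ℂ) × (Fin N → ℂ)))
        (L s) z := by
      rw [heq]; exact (L s).hasFDerivAt
    exact HasFDerivAt.comp (f := fun z : Fin N → ℂ => (((s:ℂ) • z, z) : (Fin N → ℂ) × (Fin N → ℂ))) z h1 h2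
  -- the candidate primitive
  set gfun : (Fin N → ℂ) → ℂ := fun z => ∫ s in Set.Ioc (0:ℝ) 1, B ((s:ℂ) • z, z) with hgdef
  have hBcont : Continuous B := hBC1.continuous
  have hsz_cont : ∀ z : Fin N → ℂ, Continuous fun s : ℝ =>
      (((s:ℂ) • z, z) : (Fin N → ℂ) × (Fin N → ℂ)) :=
    fun z => (Complex.continuous_ofReal.smul continuous_const).prodMk continuous_const
  have hμfin : volume (Set.Ioc (0:ℝ) 1) < ⊤ := measure_Ioc_lt_top
  have hgdiff : Differentiable ℂ gfun := by
    intro z₀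
    have hK : IsCompact ((Metric.closedBall (0 : Fin N → ℂ) (‖z₀‖+1)) ×ˢ
        (Metric.closedBall z₀ 1)) :=
      (isCompact_closedBall _ _).prod (isCompact_closedBall _ _)
    obtain ⟨C, hC⟩ := hK.exists_bound_of_continuousOn
      ((hBC1.continuous_fderiv one_ne_zero).continuousOn)
    have hC0 : 0 ≤ C := le_trans (norm_nonneg _)
      (hC (0, z₀) (by simp [Set.mem_prod, Metric.mem_closedBall]; positivity))
    have hmem : ∀ s ∈ Set.Ioc (0:ℝ) 1, ∀ z ∈ Metric.ball z₀ 1,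
        (((s:ℂ) • z, z) : (Fin N → ℂ) × (Fin N → ℂ)) ∈
          (Metric.closedBall (0 : Fin N → ℂ) (‖z₀‖+1)) ×ˢ (Metric.closedBall z₀ 1) := by
      intro s hs z hz
      have hz1 : ‖z - z₀‖ < 1 := mem_ball_iff_norm.mp hz
      have hz2 : ‖z‖ ≤ ‖z₀‖ + 1 := by
        have : ‖z‖ ≤ ‖z - z₀‖ + ‖z₀‖ := by simpa using norm_add_le (z - z₀) z₀
        linarith
      refine Set.mem_prod.mpr ⟨?_, ?_⟩
      · rw [Metric.mem_closedBall, dist_zero_right,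
          norm_smul (α := ℂ) (β := Fin N → ℂ), Complex.norm_real, Real.norm_eq_abs]
        have : |s| ≤ 1 := by rw [abs_of_pos hs.1]; exact hs.2
        nlinarith [norm_nonneg z, abs_nonneg s]
      · exact Metric.ball_subset_closedBall hz
    have hbound : ∀ s ∈ Set.Ioc (0:ℝ) 1, ∀ z ∈ Metric.ball z₀ 1,
        ‖(fderiv ℂ B ((s:ℂ) • z, z)).comp (L s)‖ ≤ C := by
      intro s hs z hz
      calc ‖(fderiv ℂ B ((s:ℂ) • z, z)).comp (L s)‖
          ≤ ‖fderiv ℂ B ((s:ℂ) • z, z)‖ * ‖L s‖ := ContinuousLinearMap.opNorm_comp_le _ _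
        _ ≤ C * 1 := mul_le_mul (hC _ (hmem s hs z hz)) (hL_norm s (le_of_lt hs.1) hs.2)
            (norm_nonneg _) hC0
        _ = C := mul_one C
    have main := hasFDerivAt_integral_of_dominated_loc_of_lip
      (μ := volume.restrict (Set.Ioc (0:ℝ) 1))
      (F := fun (z : Fin N → ℂ) (s : ℝ) => B ((s:ℂ) • z, z))
      (F' := fun s : ℝ => (fderiv ℂ B ((s:ℂ) • z₀, z₀)).comp (L s))
      (bound := fun _ => C) (x₀ := z₀) (Metric.ball_mem_nhds z₀ zero_lt_one)
      ?meas ?int ?meas' ?lip ?bint ?diff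
    case meas =>
      refine Filter.Eventually.of_forall fun z => ?_
      exact (hBcont.comp (hsz_cont z)).aestronglyMeasurable
    case int =>
      have hcont : Continuous fun s : ℝ => B ((s:ℂ) • z₀, z₀) := hBcont.comp (hsz_cont z₀)
      exact (hcont.integrableOn_Ioc)
    case meas' =>
      have hc1 : Continuous fun s : ℝ => fderiv ℂ B ((s:ℂ) • z₀, z₀) :=
        (hBC1.continuous_fderiv one_ne_zero).comp (hsz_cont z₀)
      have hc2 : Continuous L := by
        rw [hLdef]
        exact (Complex.continuous_ofReal.smul continuous_const).add continuous_const
      exact (hc1.clm_comp hc2).aestronglyMeasurable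
    case lip =>
      rw [ae_restrict_iff' measurableSet_Ioc]
      refine Filter.Eventually.of_forall fun s hs => ?_
      refine Convex.lipschitzOnWith_of_nnnorm_hasFDerivWithin_le
        (f' := fun z => (fderiv ℂ B ((s:ℂ) • z, z)).comp (L s))
        (fun z _ => (hDeriv s z).hasFDerivWithinAt) (fun z hz => ?_) (convex_ball z₀ 1)
      rw [← NNReal.coe_le_coe]
      calc (‖(fderiv ℂ B ((s:ℂ) • z, z)).comp (L s)‖₊ : ℝ)
          = ‖(fderiv ℂ B ((s:ℂ) • z, z)).comp (L s)‖ := rfl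
        _ ≤ C := hbound s hs z hz
        _ ≤ |C| := le_abs_self _
        _ = (Real.nnabs C : ℝ) := by rw [Real.coe_nnabs]
    case bint =>
      exact integrableOn_const hμfin.ne
    case diff =>
      exact Filter.Eventually.of_forall fun s => hDeriv s z₀
    exact main.2.differentiableAt
  refine ⟨fun z => ((ahat 0 : ℝ) : ℂ) - gfun z, (differentiable_const _).sub hgdiff, ?_⟩
  -- Evaluation on real points
  intro k
  set zk : Fin N → ℂ := fun j => (k j : ℂ) with hzk
  have hcoe : ∀ s : ℝ, (fun j => (((s • k : EuclideanSpace ℝ (Fin N)) j : ℝ) : ℂ))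
      = (s:ℂ) • zk := by
    intro s
    funext j
    simp [hzk, PiLp.smul_apply, Pi.smul_apply, smul_eq_mul]
    try push_cast
    try ring
  set u : ℝ → ℂ := fun s => F ((s:ℂ) • zk) with hudef
  have hu : ∀ s : ℝ, u s = ((Real.exp (-(ahat (s • k))) : ℝ) : ℂ) := by
    intro s
    rw [hudef]
    simp only
    rw [← hcoe s, hFreal (s • k)]
    rw [Complex.ofReal_exp]
    norm_num
  set c : ℝ → ℂ := fun s => fderiv ℂ F ((s:ℂ) • zk) zk with hcdef
  have hds : ∀ s : ℝ, HasDerivAt u (c s) s := by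
    intro s
    have heq : (fun s : ℝ => (s:ℂ) • zk) = fun s : ℝ => s • zk := by
      funext s
      funext j
      simp [Pi.smul_apply, Complex.real_smul]
    have h1 : HasDerivAt (fun s : ℝ => (s:ℂ) • zk) zk s := by
      rw [heq]
      simpa using (hasDerivAt_id s).smul_const zk
    exact (((hFdiff ((s:ℂ) • zk)).hasFDerivAt).restrictScalars ℝ).comp_hasDerivAt s h1
  have him : ∀ s : ℝ, (c s).im = 0 := by
    intro s
    have h1 : HasDerivAt (fun s : ℝ => (u s).im) ((c s).im) s :=
      (Complex.imCLM.hasFDerivAt).comp_hasDerivAt s (hds s)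
    have h2 : (fun s : ℝ => (u s).im) = fun _ => (0:ℝ) := by
      funext s
      rw [hu s]
      exact Complex.ofReal_im _
    rw [h2] at h1
    exact h1.unique (hasDerivAt_const s 0)
  set r : ℝ → ℝ := fun s => Real.exp (-(ahat (s • k))) with hrdef
  have hur : ∀ s : ℝ, (u s).re = r s := by
    intro s
    rw [hu s, Complex.ofReal_re]
  have hr : ∀ s : ℝ, HasDerivAt r ((c s).re) s := by
    intro s
    have h1 : HasDerivAt (fun s : ℝ => (u s).re) ((c s).re) s :=
      (Complex.reCLM.hasFDerivAt).comp_hasDerivAt s (hds s)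
    have h2 : (fun s : ℝ => (u s).re) = r := funext hur
    rwa [h2] at h1
  have hrpos : ∀ s : ℝ, 0 < r s := fun s => Real.exp_pos _
  have hcre : ∀ s : ℝ, c s = (((c s).re : ℝ) : ℂ) := by
    intro s
    apply Complex.ext
    · simp
    · simp [him s]
  have hcont_c : Continuous c := by
    have h1 : Continuous fun s : ℝ => fderiv ℂ F ((s:ℂ) • zk) :=
      (hVC1.continuous).comp (Complex.continuous_ofReal.smul continuous_const)
    exact h1.clm_apply continuous_const
  have hu' : ∀ s : ℝ, u s = ((r s : ℝ) : ℂ) := by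
    intro s
    rw [hu s]
  have hDzk : ∀ s : ℝ, B ((s:ℂ) • zk, zk) = (((c s).re / r s : ℝ) : ℂ) := by
    intro s
    have h1 : (u s)⁻¹ * c s = (((c s).re / r s : ℝ) : ℂ) := by
      rw [hu' s, Complex.ofReal_div, div_eq_inv_mul]
      congr 1
      exact hcre s
    exact h1
  have hq : ∀ s : ℝ, HasDerivAt (fun s : ℝ => -(ahat (s • k))) ((c s).re / r s) s := by
    intro s
    have h1 : HasDerivAt (fun s => Real.log (r s)) ((c s).re / r s) s :=
      (hr s).log (ne_of_gt (hrpos s))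
    have h2 : (fun s : ℝ => Real.log (r s)) = fun s : ℝ => -(ahat (s • k)) := by
      funext t
      rw [hrdef]
      simp [Real.log_exp]
    rwa [h2] at h1
  have hcont_q : Continuous fun s : ℝ => (c s).re / r s := by
    have hrc : Continuous r := by
      have hcu : Continuous u :=
        hFdiff.continuous.comp (Complex.continuous_ofReal.smul continuous_const)
      have h2 : r = fun s => (u s).re := funext fun s => (hur s).symm
      rw [h2]
      exact Complex.continuous_re.comp hcu
    exact (Complex.continuous_re.comp hcont_c).div hrc fun s => (hrpos s).ne'
  have hint : ∫ s in Set.Ioc (0:ℝ) 1, B ((s:ℂ) • zk, zk)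
      = ((-(ahat ((1:ℝ) • k)) - -(ahat ((0:ℝ) • k)) : ℝ) : ℂ) := by
    rw [← intervalIntegral.integral_of_le zero_le_one]
    calc ∫ s in (0:ℝ)..1, B ((s:ℂ) • zk, zk)
        = ∫ s in (0:ℝ)..1, (((c s).re / r s : ℝ) : ℂ) :=
          intervalIntegral.integral_congr fun s _ => hDzk s
      _ = ((∫ s in (0:ℝ)..1, (c s).re / r s : ℝ) : ℂ) := intervalIntegral.integral_ofReal
      _ = _ := by
          rw [intervalIntegral.integral_eq_sub_of_hasDerivAt (fun s _ => hq s)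
            (hcont_q.intervalIntegrable 0 1)]
  have hgk : gfun zk = ((-(ahat k) + ahat 0 : ℝ) : ℂ) := by
    rw [hgdef]
    simp only
    rw [hint]
    have : (-(ahat ((1:ℝ) • k)) - -(ahat ((0:ℝ) • k)) : ℝ) = -(ahat k) + ahat 0 := by
      rw [one_smul, zero_smul]
      ring
    rw [this]
  show ((ahat 0 : ℝ) : ℂ) - gfun zk = ((ahat k : ℝ) : ℂ)
  rw [hgk]
  push_cast
  ring
end

section
/- Let N ≥ 1 and let â : ℝ^N → ℝ be a nonnegative function that is rotationally symmetric (â(k) = â(k') whenever ‖k‖ = ‖k'‖) and such that k ↦ exp(−â(k)) is a Schwartz function on ℝ^N. Suppose that for every t > 0 there exists a continuous integrable function G_t : ℝ^N → ℂ with 𝓕G_t(k) = exp(−â(k)·t) for all k ∈ ℝ^N. Then there is NO constant c₀ > 0 such that for every t > 0 the support of G_t is contained in the closed ball of radius c₀·t centered at the origin. (In other words, the fundamental solution of a real-valued, translation- and rotation-invariant strongly continuous semigroup cannot satisfy the causality condition.) -/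
open MeasureTheory
open scoped RealInnerProductSpace

open MeasureTheory Metric Complex intervalIntegral
open scoped Topology

namespace Stmt3Aux

variable {N : ℕ}

lemma coord_le_norm (x : EuclideanSpace ℝ (Fin N)) (i : Fin N) : |x i| ≤ ‖x‖ := by
  rw [EuclideanSpace.norm_eq, ← Real.sqrt_sq_eq_abs]
  apply Real.sqrt_le_sqrt
  have : |x i| ^ 2 = x i ^ 2 := sq_abs _
  calc x i ^ 2 = ‖x i‖ ^ 2 := by rw [Real.norm_eq_abs]; exact (_root_.sq_abs _).symm
    _ ≤ ∑ j, ‖x j‖ ^ 2 := Finset.single_le_sum (f := fun j => ‖x j‖ ^ 2)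
        (fun j _ => by positivity) (Finset.mem_univ i)

lemma norm_integrand_le {f : EuclideanSpace ℝ (Fin N) → ℂ} {r : ℝ}
    (hsupp : ∀ x, f x ≠ 0 → ‖x‖ ≤ r) (i : Fin N) (z : ℂ)
    (x : EuclideanSpace ℝ (Fin N)) :
    ‖Complex.exp (Complex.I * z * (x i)) * f x‖ ≤ Real.exp (r * ‖z‖) * ‖f x‖ := by
  by_cases hx : f x = 0
  · simp [hx]
  · have h1 : |x i| ≤ r := (coord_le_norm x i).trans (hsupp x hx)
    have hr : 0 ≤ r := (abs_nonneg _).trans h1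
    rw [norm_mul]
    gcongr
    rw [Complex.norm_exp]
    apply Real.exp_le_exp.2
    have hre : (Complex.I * z * (x i : ℂ)).re = -z.im * (x i) := by
      simp [Complex.mul_re, Complex.mul_im]
    rw [hre]
    calc -z.im * x i ≤ |(-z.im) * x i| := le_abs_self _
      _ = |z.im| * |x i| := by rw [abs_mul, abs_neg]
      _ ≤ ‖z‖ * r := by
          apply mul_le_mul _ h1 (abs_nonneg _) (norm_nonneg _)
          exact (Complex.abs_im_le_norm z)
      _ = r * ‖z‖ := mul_comm _ _

lemma integrable_integrand {f : EuclideanSpace ℝ (Fin N) → ℂ}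
    (hf : Integrable f) (hfc : Continuous f) {r : ℝ}
    (hsupp : ∀ x, f x ≠ 0 → ‖x‖ ≤ r) (i : Fin N) (z : ℂ) :
    Integrable (fun x => Complex.exp (Complex.I * z * (x i)) * f x) := by
  apply (hf.norm.const_mul (Real.exp (r * ‖z‖))).mono'
  · apply Continuous.aestronglyMeasurable
    exact (Complex.continuous_exp.comp (continuous_const.mul
      (Complex.continuous_ofReal.comp (EuclideanSpace.proj i).continuous))).mul hfc
  · exact ae_of_all _ (norm_integrand_le hsupp i z)


lemma differentiable_lineFT {f : EuclideanSpace ℝ (Fin N) → ℂ}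
    (hf : Integrable f) (hfc : Continuous f) {r : ℝ} (hr : 0 ≤ r)
    (hsupp : ∀ x, f x ≠ 0 → ‖x‖ ≤ r) (i : Fin N) :
    Differentiable ℂ (fun z => ∫ x, Complex.exp (Complex.I * z * (x i)) * f x) := by
  intro z₀
  set F : ℂ → EuclideanSpace ℝ (Fin N) → ℂ :=
    fun z x => Complex.exp (Complex.I * z * (x i)) * f x with hF
  set F' : ℂ → EuclideanSpace ℝ (Fin N) → ℂ :=
    fun z x => Complex.exp (Complex.I * z * (x i)) * (Complex.I * (x i)) * f x with hF'
  have key := hasDerivAt_integral_of_dominated_loc_of_deriv_le (F := F) (F' := F')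
    (x₀ := z₀) (μ := volume) (bound := fun x => (r * Real.exp ((‖z₀‖ + 1) * r)) * ‖f x‖)
    (s := ball z₀ 1) (ball_mem_nhds z₀ one_pos) ?_ ?_ ?_ ?_ ?_ ?_
  · exact key.2.differentiableAt
  · filter_upwards with z
    exact (integrable_integrand hf hfc hsupp i z).aestronglyMeasurable
  · exact integrable_integrand hf hfc hsupp i z₀
  · apply Continuous.aestronglyMeasurable
    exact ((Complex.continuous_exp.comp (continuous_const.mul
      (Complex.continuous_ofReal.comp (EuclideanSpace.proj i).continuous))).mul
      (continuous_const.mul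
      (Complex.continuous_ofReal.comp (EuclideanSpace.proj i).continuous))).mul hfc
  · apply ae_of_all
    intro x z hz
    by_cases hx : f x = 0
    · simp [hF', hx]
    · have h1 : |x i| ≤ r := (coord_le_norm x i).trans (hsupp x hx)
      have hznorm : ‖z‖ ≤ ‖z₀‖ + 1 := by
        have := mem_ball_iff_norm.1 hz
        have := norm_sub_norm_le z z₀
        linarith
      simp only [hF']
      rw [norm_mul, norm_mul]
      have hexp : ‖Complex.exp (Complex.I * z * (x i))‖ ≤ Real.exp ((‖z₀‖ + 1) * r) := by
        rw [Complex.norm_exp]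
        apply Real.exp_le_exp.2
        have hre : (Complex.I * z * (x i : ℂ)).re = -z.im * (x i) := by
          simp [Complex.mul_re, Complex.mul_im]
        rw [hre]
        calc -z.im * x i ≤ |(-z.im) * x i| := le_abs_self _
          _ = |z.im| * |x i| := by rw [abs_mul, abs_neg]
          _ ≤ (‖z₀‖ + 1) * r := by
              apply mul_le_mul _ h1 (abs_nonneg _) (by linarith [norm_nonneg z₀])
              exact (Complex.abs_im_le_norm z).trans hznorm
      have hIx : ‖Complex.I * (x i : ℂ)‖ ≤ r := by
        rw [norm_mul, Complex.norm_I, one_mul, Complex.norm_real, Real.norm_eq_abs]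
        exact h1
      calc ‖Complex.exp (Complex.I * z * (x i))‖ * ‖(Complex.I * (x i : ℂ))‖ * ‖f x‖
          ≤ Real.exp ((‖z₀‖ + 1) * r) * r * ‖f x‖ := by
            gcongr
        _ = r * Real.exp ((‖z₀‖ + 1) * r) * ‖f x‖ := by ring
  · exact (hf.norm.const_mul _)
  · apply ae_of_all
    intro x z hz
    have base : HasDerivAt (fun z : ℂ => Complex.I * z * (x i : ℂ)) (Complex.I * (x i : ℂ)) z := by
      simpa using ((hasDerivAt_id z).const_mul Complex.I).mul_const ((x i : ℝ) : ℂ)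
    simpa [hF, hF'] using (base.cexp.mul_const (f x))

lemma norm_lineFT_le {f : EuclideanSpace ℝ (Fin N) → ℂ}
    (hf : Integrable f) (hfc : Continuous f) {r : ℝ}
    (hsupp : ∀ x, f x ≠ 0 → ‖x‖ ≤ r) (i : Fin N) (z : ℂ) :
    ‖∫ x, Complex.exp (Complex.I * z * (x i)) * f x‖
      ≤ Real.exp (r * ‖z‖) * ∫ x, ‖f x‖ := by
  calc ‖∫ x, Complex.exp (Complex.I * z * (x i)) * f x‖
      ≤ ∫ x, ‖Complex.exp (Complex.I * z * (x i)) * f x‖ := norm_integral_le_integral_norm _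
    _ ≤ ∫ x, Real.exp (r * ‖z‖) * ‖f x‖ := by
        apply integral_mono (integrable_integrand hf hfc hsupp i z).norm
          (hf.norm.const_mul _) (norm_integrand_le hsupp i z)
    _ = Real.exp (r * ‖z‖) * ∫ x, ‖f x‖ := integral_const_mul _ _


lemma borel_caratheodory {h : ℂ → ℂ} (hd : Differentiable ℂ h) (h0 : h 0 = 0) {α c₀ : ℝ}
    (hα : 0 < α) (hc₀ : 0 ≤ c₀) (hre : ∀ z, (h z).re ≤ α + c₀ * ‖z‖) (z : ℂ) :
    ‖h z‖ ≤ (4 * α + 4 * c₀) + 8 * c₀ * ‖z‖ := by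
  set R : ℝ := 2 * ‖z‖ + 1 with hR
  have hRpos : 0 < R := by positivity
  set M : ℝ := α + c₀ * R with hM
  have hMpos : 0 < M := by positivity
  have hreM : ∀ w ∈ ball (0:ℂ) R, (h w).re ≤ M := by
    intro w hw
    have h1 : ‖w‖ < R := by simpa [mem_ball_iff_norm] using hw
    have h2 := hre w
    nlinarith
  have hnormlt : ∀ w ∈ ball (0:ℂ) R, ‖h w‖ < ‖(((4 * M : ℝ) : ℂ) - h w)‖ := by
    intro w hw
    have hrew := hreM w hw
    apply lt_of_pow_lt_pow_left₀ 2 (norm_nonneg _)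
    have e1 : ‖h w‖ ^ 2 = (h w).re ^ 2 + (h w).im ^ 2 := by
      rw [Complex.sq_norm, Complex.normSq_apply]; ring
    have e2 : ‖(((4 * M : ℝ) : ℂ) - h w)‖ ^ 2 = (4 * M - (h w).re) ^ 2 + (h w).im ^ 2 := by
      rw [Complex.sq_norm, Complex.normSq_apply, Complex.sub_re,
        Complex.sub_im, Complex.ofReal_re, Complex.ofReal_im]; ring
    rw [e1, e2]; nlinarith
  have hden : ∀ w ∈ ball (0:ℂ) R, ((4 * M : ℝ) : ℂ) - h w ≠ 0 := by
    intro w hw hcontra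
    have := hnormlt w hw
    rw [hcontra] at this
    simp at this
    exact absurd (norm_nonneg (h w)) (not_le.2 this)
  set φ : ℂ → ℂ := fun w => h w / (((4 * M : ℝ) : ℂ) - h w) with hφ
  have hφd : DifferentiableOn ℂ φ (ball (0:ℂ) R) :=
    (hd.differentiableOn).div ((differentiable_const _).sub hd).differentiableOn hden
  have hφ0 : φ 0 = 0 := by simp [hφ, h0]
  have hmaps : Set.MapsTo φ (ball (0:ℂ) R) (ball (φ 0) 1) := by
    intro w hw
    rw [hφ0, mem_ball_iff_norm, sub_zero]
    simp only [hφ, norm_div]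
    rw [div_lt_one (lt_of_le_of_lt (norm_nonneg _) (hnormlt w hw))]
    exact hnormlt w hw
  have hzball : z ∈ ball (0:ℂ) R := by
    rw [mem_ball_iff_norm, sub_zero]; simp only [hR]; linarith
  have hschwarz := Complex.dist_le_div_mul_dist_of_mapsTo_ball hφd (hmaps.mono_right ball_subset_closedBall) hzball
  rw [hφ0, dist_eq_norm, sub_zero, dist_eq_norm, sub_zero] at hschwarz
  have hφz : ‖φ z‖ ≤ 1 / 2 := by
    calc ‖φ z‖ ≤ 1 / R * ‖z‖ := hschwarz
      _ ≤ 1 / 2 := by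
          rw [div_mul_eq_mul_div, one_mul, div_le_div_iff₀ hRpos two_pos]
          simp only [hR]; linarith [norm_nonneg z]
  have hzval : h z = φ z * (((4 * M : ℝ) : ℂ) - h z) := by
    rw [hφ, div_mul_cancel₀ _ (hden z hzball)]
  have hnorm4M : ‖(((4 * M : ℝ) : ℂ))‖ = 4 * M := by
    rw [Complex.norm_real, Real.norm_eq_abs, abs_of_pos (by positivity)]
  have hfinal : ‖h z‖ ≤ 4 * M := by
    have hnsub : ‖(((4 * M : ℝ) : ℂ)) - h z‖ ≤ 4 * M + ‖h z‖ := by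
      calc ‖(((4 * M : ℝ) : ℂ)) - h z‖ ≤ ‖(((4 * M : ℝ) : ℂ))‖ + ‖h z‖ := norm_sub_le _ _
        _ = 4 * M + ‖h z‖ := by rw [hnorm4M]
    have hkey : ‖h z‖ ≤ (1 / 2) * (4 * M + ‖h z‖) := by
      conv_lhs => rw [hzval]
      rw [norm_mul]
      exact mul_le_mul hφz hnsub (norm_nonneg _) (by norm_num)
    nlinarith [norm_nonneg (h z), hMpos]
  calc ‖h z‖ ≤ 4 * M := hfinal
    _ = (4 * α + 4 * c₀) + 8 * c₀ * ‖z‖ := by rw [hM, hR]; ring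

lemma affine_of_linear_growth {h : ℂ → ℂ} (hd : Differentiable ℂ h) {C D : ℝ} (hD : 0 ≤ D)
    (hb : ∀ z, ‖h z‖ ≤ C + D * ‖z‖) (z : ℂ) : h z = h 0 + (deriv h 0) * z := by
  have han : AnalyticOnNhd ℂ h Set.univ := fun w _ => hd.analyticAt w
  have hd' : Differentiable ℂ (deriv h) := fun w =>
    ((han.deriv) w (Set.mem_univ w)).differentiableAt
  have hCabs : ∀ w, ‖h w‖ ≤ |C| + D * ‖w‖ := fun w =>
    (hb w).trans (by gcongr; exact le_abs_self C)
  have hderiv_bd : ∀ w : ℂ, ‖deriv h w‖ ≤ |C| + 2 * D := by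
    intro w
    set R : ℝ := ‖w‖ + 1 with hRdef
    have hRpos : 0 < R := by positivity
    have key := Complex.norm_deriv_le_of_forall_mem_sphere_norm_le (c := w) hRpos
      (hd.diffContOnCl) (C := |C| + D * (‖w‖ + R)) ?_
    · calc ‖deriv h w‖ ≤ (|C| + D * (‖w‖ + R)) / R := key
        _ ≤ |C| + 2 * D := by
            rw [div_le_iff₀ hRpos]
            have h1 : 1 ≤ R := by simp only [hRdef]; linarith [norm_nonneg w]
            have h2 : ‖w‖ + R ≤ 2 * R := by simp only [hRdef]; linarith [norm_nonneg w]
            nlinarith [abs_nonneg C, norm_nonneg w]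
    · intro x hx
      have hxnorm : ‖x‖ ≤ ‖w‖ + R := by
        have : dist x w = R := by simpa [dist_eq_norm] using hx
        calc ‖x‖ = ‖w + (x - w)‖ := by ring_nf
          _ ≤ ‖w‖ + ‖x - w‖ := norm_add_le _ _
          _ = ‖w‖ + R := by rw [← dist_eq_norm x w, this]
      calc ‖h x‖ ≤ |C| + D * ‖x‖ := hCabs x
        _ ≤ |C| + D * (‖w‖ + R) := by gcongr
  have hbdd : Bornology.IsBounded (Set.range (deriv h)) := by
    rw [isBounded_iff_forall_norm_le]
    exact ⟨|C| + 2 * D, by rintro _ ⟨w, rfl⟩; exact hderiv_bd w⟩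
  have hconst : ∀ w : ℂ, deriv h w = deriv h 0 := fun w =>
    hd'.apply_eq_apply_of_bounded hbdd w 0
  set g : ℂ → ℂ := fun w => h w - (deriv h 0) * w with hg
  have hgd : Differentiable ℂ g := hd.sub ((differentiable_id.const_mul _))
  have hgderiv : ∀ w, deriv g w = 0 := by
    intro w
    have h1 : HasDerivAt h (deriv h 0) w := by
      rw [← hconst w]; exact hd.differentiableAt.hasDerivAt
    have h2 : HasDerivAt (fun y : ℂ => (deriv h 0) * y) (deriv h 0) w := by
      simpa using (hasDerivAt_id w).const_mul (deriv h 0)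
    have := (h1.sub h2).deriv
    rw [sub_self] at this
    exact this
  have := is_const_of_deriv_eq_zero hgd hgderiv z 0
  simp only [hg] at this
  have h0' : h 0 - deriv h 0 * 0 = h 0 := by ring_nf
  rw [h0'] at this
  linear_combination this

lemma exists_entire_log {f : ℂ → ℂ} (hd : Differentiable ℂ f) (hne : ∀ z, f z ≠ 0) :
    ∃ h : ℂ → ℂ, Differentiable ℂ h ∧ ∀ z, Complex.exp (h z) = f z := by
  have han : AnalyticOnNhd ℂ f Set.univ := fun w _ => hd.analyticAt w
  have hdf : Differentiable ℂ (deriv f) := fun w =>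
    ((han.deriv) w (Set.mem_univ w)).differentiableAt
  set u : ℂ → ℂ := fun z => deriv f z / f z with hu_def
  have hu : Differentiable ℂ u := hdf.div hd hne
  have huan : AnalyticOnNhd ℂ u Set.univ := fun w _ => hu.analyticAt w
  have hdu : Differentiable ℂ (deriv u) := fun w =>
    ((huan.deriv) w (Set.mem_univ w)).differentiableAt
  have huf : ∀ z, u z * f z = deriv f z := fun z => div_mul_cancel₀ _ (hne z)
  set h : ℂ → ℂ := fun z => Complex.log (f 0) + ∫ t in (0:ℝ)..1, z * u ((t : ℝ) * z) with hh_def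
  have hh : ∀ z₀ : ℂ, HasDerivAt h (u z₀) z₀ := by
    intro z₀
    set K : ℝ := ‖z₀‖ + 1 with hK
    have hKpos : 0 < K := by positivity
    obtain ⟨C₁, hC₁⟩ := (isCompact_closedBall (0:ℂ) K).exists_bound_of_continuousOn
      (hu.continuous.continuousOn)
    obtain ⟨C₂, hC₂⟩ := (isCompact_closedBall (0:ℂ) K).exists_bound_of_continuousOn
      (hdu.continuous.continuousOn)
    have hC₁0 : 0 ≤ C₁ := le_trans (norm_nonneg _) (hC₁ 0 (mem_closedBall_self hKpos.le))
    have hC₂0 : 0 ≤ C₂ := le_trans (norm_nonneg _) (hC₂ 0 (mem_closedBall_self hKpos.le))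
    set F : ℂ → ℝ → ℂ := fun z t => z * u ((t : ℝ) * z) with hF
    set F' : ℂ → ℝ → ℂ := fun z t => 1 * u ((t : ℝ) * z) + z * (deriv u ((t : ℝ) * z) * (t : ℝ))
      with hF'
    have hcont : ∀ z : ℂ, Continuous (fun t : ℝ => F z t) := by
      intro z
      exact continuous_const.mul (hu.continuous.comp
        (Complex.continuous_ofReal.mul continuous_const))
    have hcont' : Continuous (fun t : ℝ => F' z₀ t) := by
      apply Continuous.add
      · exact continuous_const.mul (hu.continuous.comp
          (Complex.continuous_ofReal.mul continuous_const))
      · exact continuous_const.mul (((hdu.continuous.comp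
          (Complex.continuous_ofReal.mul continuous_const))).mul Complex.continuous_ofReal)
    have key := intervalIntegral.hasDerivAt_integral_of_dominated_loc_of_deriv_le
      (F := F) (F' := F') (x₀ := z₀) (a := (0:ℝ)) (b := (1:ℝ)) (μ := volume)
      (bound := fun _ => C₁ + K * C₂) (s := ball z₀ 1) (ball_mem_nhds z₀ one_pos) ?_ ?_ ?_ ?_ ?_ ?_
    · -- conclude
      have hFTC : (∫ t in (0:ℝ)..1, F' z₀ t) = u z₀ := by
        have hW : ∀ w : ℂ, HasDerivAt (fun w : ℂ => w * u (w * z₀))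
            (1 * u (w * z₀) + w * (deriv u (w * z₀) * (1 * z₀))) w := by
          intro w
          exact (hasDerivAt_id w).mul
            ((hu _).hasDerivAt.comp w ((hasDerivAt_id w).mul_const z₀))
        have hFTC' : (∫ t in (0:ℝ)..1,
            (1 * u (((t:ℝ):ℂ) * z₀) + ((t:ℝ):ℂ) * (deriv u (((t:ℝ):ℂ) * z₀) * (1 * z₀))))
            = ((1:ℝ):ℂ) * u (((1:ℝ):ℂ) * z₀) - ((0:ℝ):ℂ) * u (((0:ℝ):ℂ) * z₀) := by
          refine intervalIntegral.integral_eq_sub_of_hasDerivAt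
            (f := fun s : ℝ => ((s:ℝ):ℂ) * u (((s:ℝ):ℂ) * z₀)) ?_ ?_
          · intro t _
            exact (hW ((t:ℝ):ℂ)).comp_ofReal
          · apply Continuous.intervalIntegrable
            apply Continuous.add
            · exact continuous_const.mul (hu.continuous.comp
                (Complex.continuous_ofReal.mul continuous_const))
            · exact Complex.continuous_ofReal.mul (((hdu.continuous.comp
                (Complex.continuous_ofReal.mul continuous_const))).mul continuous_const)
        have heq : (∫ t in (0:ℝ)..1, F' z₀ t) = ∫ t in (0:ℝ)..1,
            (1 * u (((t:ℝ):ℂ) * z₀) + ((t:ℝ):ℂ) * (deriv u (((t:ℝ):ℂ) * z₀) * (1 * z₀))) := by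
          apply intervalIntegral.integral_congr
          intro t _
          simp only [hF']
          ring
        rw [heq, hFTC']
        simp
      have : HasDerivAt (fun z => ∫ t in (0:ℝ)..1, F z t) (u z₀) z₀ := hFTC ▸ key.2
      have hfinal : HasDerivAt h (u z₀) z₀ := by
        simpa only [hh_def] using this.const_add (Complex.log (f 0))
      exact hfinal
    · filter_upwards with z
      exact (hcont z).aestronglyMeasurable
    · exact Continuous.intervalIntegrable (hcont z₀) 0 1
    · exact hcont'.aestronglyMeasurable
    · apply ae_of_all
      intro t ht z hz
      have ht' : |t| ≤ 1 := by
        rw [Set.uIoc_of_le (by norm_num : (0:ℝ) ≤ 1)] at ht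
        rw [abs_of_pos ht.1]; exact ht.2
      have hznorm : ‖z‖ ≤ K := by
        have h1 := mem_ball_iff_norm.1 hz
        have h2 := norm_sub_norm_le z z₀
        simp only [hK]; linarith
      have harg : ((t:ℝ):ℂ) * z ∈ closedBall (0:ℂ) K := by
        rw [mem_closedBall_iff_norm, sub_zero, norm_mul, Complex.norm_real, Real.norm_eq_abs]
        calc |t| * ‖z‖ ≤ 1 * K := by
              apply mul_le_mul ht' hznorm (norm_nonneg _) zero_le_one
          _ = K := one_mul K
      simp only [hF']
      calc ‖1 * u (((t:ℝ):ℂ) * z) + z * (deriv u (((t:ℝ):ℂ) * z) * ((t:ℝ):ℂ))‖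
          ≤ ‖1 * u (((t:ℝ):ℂ) * z)‖ + ‖z * (deriv u (((t:ℝ):ℂ) * z) * ((t:ℝ):ℂ))‖ :=
            norm_add_le _ _
        _ ≤ C₁ + K * C₂ := by
            apply add_le_add
            · rw [one_mul]; exact hC₁ _ harg
            · rw [norm_mul, norm_mul, Complex.norm_real, Real.norm_eq_abs]
              calc ‖z‖ * (‖deriv u (((t:ℝ):ℂ) * z)‖ * |t|) ≤ K * (C₂ * 1) := by
                    apply mul_le_mul hznorm _ (by positivity) hKpos.le
                    exact mul_le_mul (hC₂ _ harg) ht' (abs_nonneg _) hC₂0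
                _ = K * C₂ := by ring
    · exact intervalIntegrable_const
    · apply ae_of_all
      intro t _ z _
      have hinner : HasDerivAt (fun z : ℂ => ((t:ℝ):ℂ) * z) (((t:ℝ):ℂ)) z := by
        simpa using (hasDerivAt_id z).const_mul (((t:ℝ):ℂ))
      exact (hasDerivAt_id z).mul ((hu _).hasDerivAt.comp z hinner)
  -- now the exponential identity
  refine ⟨h, fun z => (hh z).differentiableAt, ?_⟩
  have hψ : ∀ z : ℂ, HasDerivAt (fun z => Complex.exp (-h z) * f z) 0 z := by
    intro z
    have h1 : HasDerivAt (fun z => Complex.exp (-h z)) (Complex.exp (-h z) * (-u z)) z :=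
      (hh z).neg.cexp
    have h2 := h1.mul (hd.differentiableAt.hasDerivAt (x := z))
    have : Complex.exp (-h z) * (-u z) * f z + Complex.exp (-h z) * deriv f z = 0 := by
      have := huf z
      calc Complex.exp (-h z) * (-u z) * f z + Complex.exp (-h z) * deriv f z
          = Complex.exp (-h z) * (deriv f z - u z * f z) := by ring
        _ = 0 := by rw [huf z]; ring
    rwa [this] at h2
  have hconst : ∀ z : ℂ, Complex.exp (-h z) * f z = Complex.exp (-h 0) * f 0 := by
    intro z
    exact is_const_of_deriv_eq_zero (fun w => (hψ w).differentiableAt)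
      (fun w => (hψ w).deriv) z 0
  have hh0 : h 0 = Complex.log (f 0) := by
    simp only [hh_def]
    have : (∫ t in (0:ℝ)..1, (0:ℂ) * u ((t : ℝ) * 0)) = 0 := by
      simp
    rw [this, add_zero]
  intro z
  have hz := hconst z
  rw [hh0] at hz
  rw [Complex.exp_neg, Complex.exp_neg, Complex.exp_log (hne 0),
    inv_mul_cancel₀ (hne 0)] at hz
  rwa [inv_mul_eq_one₀ (Complex.exp_ne_zero _)] at hz

lemma eq_on_real_eq {f g : ℂ → ℂ} (hf : Differentiable ℂ f) (hg : Differentiable ℂ g)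
    (hfg : ∀ s : ℝ, f s = g s) : ∀ z, f z = g z := by
  have hfa : AnalyticOnNhd ℂ f Set.univ := fun w _ => hf.analyticAt w
  have hga : AnalyticOnNhd ℂ g Set.univ := fun w _ => hg.analyticAt w
  have hfreq : ∃ᶠ z in 𝓝[≠] (0:ℂ), f z = g z := by
    have htend : Filter.Tendsto (fun n : ℕ => (((1:ℝ)/(n+1) : ℝ) : ℂ)) Filter.atTop
        (𝓝[≠] (0:ℂ)) := by
      rw [tendsto_nhdsWithin_iff]
      constructor
      · have h1 : Filter.Tendsto (fun n : ℕ => (1:ℝ)/(n+1)) Filter.atTop (𝓝 0) :=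
          tendsto_one_div_add_atTop_nhds_zero_nat
        have h2 := (Complex.continuous_ofReal.tendsto 0).comp h1
        have h3 : ((0:ℝ):ℂ) = 0 := by norm_num
        rw [h3] at h2
        convert h2 using 2 with n
        rfl
      · filter_upwards with n
        simp only [Set.mem_compl_iff, Set.mem_singleton_iff]
        intro hcontra
        have : (1:ℝ)/(n+1) = 0 := by exact_mod_cast hcontra
        have : (0:ℝ) < 1/(n+1) := by positivity
        linarith
    exact htend.frequently (Filter.Frequently.of_forall (fun n => hfg _))
  exact fun z => hfa.eqOn_of_preconnected_of_frequently_eq hga isPreconnected_univ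
    (Set.mem_univ 0) hfreq (Set.mem_univ z)

lemma zero_free {f : ℂ → ℂ} (hf : Differentiable ℂ f) (hf0 : f 0 ≠ 0)
    (hroots : ∀ n : ℕ, ∃ q : ℂ → ℂ, Differentiable ℂ q ∧ ∀ z, q z ^ (n+1) = f z) :
    ∀ z, f z ≠ 0 := by
  intro w hw
  have hfa : AnalyticAt ℂ f w := hf.analyticAt w
  have hnotev : ¬ (∀ᶠ z in 𝓝 w, f z = 0) := by
    intro hev
    have han : AnalyticOnNhd ℂ f Set.univ := fun z _ => hf.analyticAt z
    have := han.eqOn_zero_of_preconnected_of_eventuallyEq_zero isPreconnected_univ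
      (Set.mem_univ w) hev
    exact hf0 (this (Set.mem_univ 0))
  have hne_top : analyticOrderAt f w ≠ ⊤ := fun h => hnotev (analyticOrderAt_eq_top.1 h)
  obtain ⟨m, hm⟩ := WithTop.ne_top_iff_exists.1 hne_top
  obtain ⟨q, hqd, hq⟩ := hroots m
  have hqw : q w = 0 := by
    have h1 : q w ^ (m+1) = 0 := by rw [hq w, hw]
    exact pow_eq_zero_iff (by omega) |>.1 h1
  have hqa : AnalyticAt ℂ q w := hqd.analyticAt w
  have hqnotev : ¬ (∀ᶠ z in 𝓝 w, q z = 0) := by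
    intro hev
    apply hnotev
    filter_upwards [hev] with z hz
    rw [← hq z, hz]
    simp
  have hqne_top : analyticOrderAt q w ≠ ⊤ := fun h => hqnotev (analyticOrderAt_eq_top.1 h)
  obtain ⟨l, hl⟩ := WithTop.ne_top_iff_exists.1 hqne_top
  obtain ⟨r, hra, hr0, hrep⟩ := hqa.analyticOrderAt_eq_natCast.1 hl.symm
  have hl1 : 1 ≤ l := by
    rcases Nat.eq_zero_or_pos l with h0 | h; swap
    · exact h
    exfalso
    apply hr0
    have := hrep.self_of_nhds
    rw [h0] at this
    simpa [hqw] using this.symm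
  have hfrep : ∀ᶠ z in 𝓝 w, f z = (z - w) ^ (l*(m+1)) • ((fun z => r z ^ (m+1)) z) := by
    filter_upwards [hrep] with z hz
    rw [← hq z, hz]
    simp only [smul_eq_mul]
    rw [mul_pow, ← pow_mul]
  have horder : analyticOrderAt f w = ↑(l*(m+1)) :=
    hfa.analyticOrderAt_eq_natCast.2 ⟨fun z => r z ^ (m+1), hra.pow _, pow_ne_zero _ hr0, hfrep⟩
  rw [← hm] at horder
  have hmm : m = l * (m+1) := by
    have := WithTop.coe_inj.1 horder
    exact_mod_cast this
  have : m + 1 ≤ l * (m+1) := Nat.le_mul_of_pos_left (m+1) hl1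
  omega


end Stmt3Aux

/-- The fundamental solution of a real-valued, rotation-invariant, strongly continuous
semigroup (with `exp (-â)` Schwartz) cannot satisfy the causality condition
`supp (G t) ⊆ closedBall 0 (c₀ t)`. -/
theorem stmt_3 (N : ℕ) (hN : 1 ≤ N) (ahat : EuclideanSpace ℝ (Fin N) → ℝ)
    (hnonneg : ∀ k, 0 ≤ ahat k)
    (hrot : ∀ k k' : EuclideanSpace ℝ (Fin N), ‖k‖ = ‖k'‖ → ahat k = ahat k')
    (hschwartz : ∃ φ : SchwartzMap (EuclideanSpace ℝ (Fin N)) ℝ,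
      ∀ k, φ k = Real.exp (-ahat k))
    (G : ℝ → EuclideanSpace ℝ (Fin N) → ℂ)
    (hGc : ∀ t : ℝ, 0 < t → Continuous (G t))
    (hGi : ∀ t : ℝ, 0 < t → Integrable (G t))
    (hGft : ∀ t : ℝ, 0 < t → ∀ k : EuclideanSpace ℝ (Fin N),
      paperFourier (G t) k = Complex.exp (-(ahat k * t))) :
    ¬ ∃ c₀ : ℝ, 0 < c₀ ∧ ∀ t : ℝ, 0 < t →
      tsupport (G t) ⊆ Metric.closedBall (0 : EuclideanSpace ℝ (Fin N)) (c₀ * t) := by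
  rintro ⟨c₀, hc₀, hsupp⟩
  obtain ⟨φ, hφ⟩ := hschwartz
  set i0 : Fin N := ⟨0, hN⟩ with hi0
  set e1 : EuclideanSpace ℝ (Fin N) := EuclideanSpace.single i0 (1:ℝ) with he1def
  have he1 : ‖e1‖ = 1 := by rw [he1def, EuclideanSpace.norm_single]; norm_num
  set b : ℝ → ℝ := fun s => ahat (s • e1) with hbdef
  have hsupp' : ∀ t : ℝ, 0 < t → ∀ x, G t x ≠ 0 → ‖x‖ ≤ c₀ * t := by
    intro t ht x hx
    have h1 : x ∈ tsupport (G t) := subset_closure hx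
    have h2 := hsupp t ht h1
    simpa [Metric.mem_closedBall, dist_zero_right] using h2
  set Cn : ℝ := (2 * Real.pi) ^ (-(N : ℝ) / 2) with hCndef
  have hCnpos : 0 < Cn := by
    rw [hCndef]
    apply Real.rpow_pos_of_pos
    positivity
  set E : ℝ → ℂ → ℂ := fun t z =>
    (Cn : ℂ) * ∫ x, Complex.exp (Complex.I * z * (x i0)) * G t x with hEdef
  have hEdiff : ∀ t : ℝ, 0 < t → Differentiable ℂ (E t) := by
    intro t ht
    exact (Stmt3Aux.differentiable_lineFT (hGi t ht) (hGc t ht)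
      (by positivity) (hsupp' t ht) i0).const_mul _
  have hEreal : ∀ t : ℝ, 0 < t → ∀ s : ℝ,
      E t (s : ℂ) = Complex.exp (-((b s * t : ℝ) : ℂ)) := by
    intro t ht s
    have hk := hGft t ht (s • e1)
    have hpf : paperFourier (G t) (s • e1) = E t (s : ℂ) := by
      rw [paperFourier, hEdef]
      congr 1
      refine congrArg _ (funext fun x => ?_)
      have hinner : (⟪s • e1, x⟫ : ℝ) = s * x i0 := by
        rw [real_inner_smul_left, he1def, EuclideanSpace.inner_single_left]
        simp
      rw [hinner]
      push_cast
      rw [mul_assoc]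
    rw [← hpf, hk]
    norm_cast
  -- bound for E 1
  have hA1 : ∀ z, ‖E 1 z‖ ≤ (Cn * ∫ x, ‖G 1 x‖) * Real.exp (c₀ * ‖z‖) := by
    intro z
    rw [hEdef]
    simp only []
    rw [norm_mul, Complex.norm_real, Real.norm_eq_abs, abs_of_pos hCnpos]
    have := Stmt3Aux.norm_lineFT_le (hGi 1 one_pos) (hGc 1 one_pos)
      (r := c₀ * 1) (hsupp' 1 one_pos) i0 z
    rw [mul_one] at this
    calc Cn * ‖∫ x, Complex.exp (Complex.I * z * (x i0)) * G 1 x‖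
        ≤ Cn * (Real.exp (c₀ * ‖z‖) * ∫ x, ‖G 1 x‖) := by
          apply mul_le_mul_of_nonneg_left this hCnpos.le
      _ = (Cn * ∫ x, ‖G 1 x‖) * Real.exp (c₀ * ‖z‖) := by ring
  set A : ℝ := max (Cn * ∫ x, ‖G 1 x‖) 1 with hAdef
  have hA1' : 1 ≤ A := le_max_right _ _
  have hApos : 0 < A := lt_of_lt_of_le one_pos hA1'
  have hAbound : ∀ z, ‖E 1 z‖ ≤ A * Real.exp (c₀ * ‖z‖) := by
    intro z
    exact (hA1 z).trans (by gcongr; exact le_max_left _ _)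
  have hE10 : E 1 0 ≠ 0 := by
    have := hEreal 1 one_pos 0
    norm_num at this
    rw [this]
    exact Complex.exp_ne_zero _
  -- roots
  have hroots : ∀ n : ℕ, ∃ q : ℂ → ℂ, Differentiable ℂ q ∧ ∀ z, q z ^ (n+1) = E 1 z := by
    intro n
    have hn1 : (0:ℝ) < 1 / (n+1) := by positivity
    refine ⟨E (1/(n+1)), hEdiff _ hn1, ?_⟩
    have := Stmt3Aux.eq_on_real_eq (f := fun z => E (1/(n+1)) z ^ (n+1)) (g := E 1)
      ((hEdiff _ hn1).pow _) (hEdiff 1 one_pos) ?_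
    · exact this
    · intro s
      show E (1 / ((n:ℝ) + 1)) (s:ℂ) ^ (n + 1) = E 1 (s:ℂ)
      rw [hEreal _ hn1 s, hEreal 1 one_pos s, ← Complex.exp_nat_mul]
      congr 1
      push_cast
      have hne : ((n:ℂ) + 1) ≠ 0 := by
        exact_mod_cast Nat.cast_add_one_ne_zero (R := ℂ) n
      field_simp
  have hE1ne : ∀ z, E 1 z ≠ 0 :=
    Stmt3Aux.zero_free (hEdiff 1 one_pos) hE10 hroots
  -- logarithm
  obtain ⟨h, hhd, hhexp⟩ := Stmt3Aux.exists_entire_log (hEdiff 1 one_pos) hE1ne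
  have hre : ∀ z, (h z).re ≤ Real.log A + c₀ * ‖z‖ := by
    intro z
    have h1 : Real.exp ((h z).re) = ‖E 1 z‖ := by
      rw [← hhexp z, Complex.norm_exp]
    have h2 : Real.exp ((h z).re) ≤ Real.exp (Real.log A + c₀ * ‖z‖) := by
      rw [h1, Real.exp_add, Real.exp_log hApos]
      exact hAbound z
    exact Real.exp_le_exp.1 h2
  set α : ℝ := Real.log A + |(h 0).re| + 1 with hαdef
  have hαpos : 0 < α := by
    have : 0 ≤ Real.log A := Real.log_nonneg hA1'
    rw [hαdef]; positivity
  have hBC : ∀ z, ‖h z - h 0‖ ≤ (4 * α + 4 * c₀) + 8 * c₀ * ‖z‖ := by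
    apply Stmt3Aux.borel_caratheodory (hhd.sub_const _) (by simp) hαpos hc₀.le
    intro z
    rw [Complex.sub_re]
    have := hre z
    have habs : -(h 0).re ≤ |(h 0).re| := neg_le_abs _
    rw [hαdef]
    linarith
  have hlin : ∀ z, ‖h z‖ ≤ ((4 * α + 4 * c₀) + ‖h 0‖) + 8 * c₀ * ‖z‖ := by
    intro z
    calc ‖h z‖ = ‖(h z - h 0) + h 0‖ := by ring_nf
      _ ≤ ‖h z - h 0‖ + ‖h 0‖ := norm_add_le _ _
      _ ≤ ((4 * α + 4 * c₀) + ‖h 0‖) + 8 * c₀ * ‖z‖ := by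
          have := hBC z; linarith
  have haffine : ∀ z, h z = h 0 + (deriv h 0) * z :=
    Stmt3Aux.affine_of_linear_growth hhd (by positivity) hlin
  set a : ℂ := deriv h 0 with hadef
  -- on the real axis
  have hbs : ∀ s : ℝ, -(b s) = (h 0).re + a.re * s := by
    intro s
    have h1 : Real.exp (-(b s)) = ‖E 1 (s:ℂ)‖ := by
      rw [hEreal 1 one_pos s]
      rw [mul_one, Complex.norm_exp]
      simp
    have h2 : ‖E 1 (s:ℂ)‖ = Real.exp ((h (s:ℂ)).re) := by
      rw [← hhexp (s:ℂ), Complex.norm_exp]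
    have h3 : (h (s:ℂ)).re = (h 0).re + a.re * s := by
      rw [haffine (s:ℂ), Complex.add_re, Complex.mul_re]
      simp
    rw [h2, h3] at h1
    exact Real.exp_injective h1
  have heven : ∀ s : ℝ, b (-s) = b s := by
    intro s
    rw [hbdef]
    apply hrot
    rw [norm_smul, norm_smul, he1]
    simp
  have hare : a.re = 0 := by
    have h1 := hbs 1
    have h2 := hbs (-1)
    have h3 := heven 1
    rw [h3] at h2
    linarith
  have hbconst : ∀ s : ℝ, b s = -(h 0).re := by
    intro s
    have := hbs s
    rw [hare] at this
    linarith
  -- Schwartz decay contradiction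
  obtain ⟨C, hCpos0, hC⟩ := φ.decay 1 0
  set K : ℝ := Real.exp ((h 0).re) with hKdef
  have hKpos : 0 < K := Real.exp_pos _
  set s : ℝ := (C + 1) / K with hsdef
  have hspos : 0 < s := by rw [hsdef]; positivity
  have hx := hC (s • e1)
  rw [norm_iteratedFDeriv_zero] at hx
  have hφx : ‖φ (s • e1)‖ = K := by
    rw [hφ (s • e1)]
    rw [Real.norm_eq_abs, abs_of_pos (Real.exp_pos _)]
    rw [hKdef]
    congr 1
    have : ahat (s • e1) = b s := rfl
    rw [this, hbconst s]
    ring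
  have hxnorm : ‖s • e1‖ = s := by
    rw [norm_smul, he1, Real.norm_eq_abs, abs_of_pos hspos]; ring
  rw [hφx, hxnorm] at hx
  have : s * K = C + 1 := by
    rw [hsdef]; field_simp
  simp only [pow_one] at hx
  rw [this] at hx
  linarith
end

section
/- Let N ≥ 1, let b be a nonzero real number, and let n : {1,…,N} → ℕ be a multi-index with n ≠ 0. Define the entire function F : ℂ^N → ℂ by F(z) = exp(−b·∏_{j=1}^N z_j^{2n_j}). Then F violates every Paley–Wiener bound: for all constants C > 0, M ≥ 0 and L ≥ 0 there exists z ∈ ℂ^N such that |F(z)| > C·(1 + ‖z‖)^M · exp(L·∑_{j=1}^N |Im z_j|). (Consequently, the inverse Fourier transform of k ↦ exp(−b·k^{2n}) cannot be a distribution of compact support.) -/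
/-- The entire function `F(z) = exp (-b ∏ z_j^{2 n_j})`, with `b ≠ 0` and multi-index
`n ≠ 0`, violates every Paley–Wiener bound. -/
theorem stmt_4 (N : ℕ) (hN : 1 ≤ N) (b : ℝ) (hb : b ≠ 0)
    (n : Fin N → ℕ) (hn : n ≠ 0) :
    ∀ C M L : ℝ, 0 < C → 0 ≤ M → 0 ≤ L →
      ∃ z : EuclideanSpace ℂ (Fin N),
        ‖Complex.exp (-(b : ℂ) * ∏ j : Fin N, z j ^ (2 * n j))‖ >
          C * (1 + ‖z‖) ^ M * Real.exp (L * ∑ j : Fin N, |(z j).im|) := by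
  intro C M L hC hM hL
  obtain ⟨j0, hj0⟩ : ∃ j, n j ≠ 0 := by
    by_contra h; push_neg at h; exact hn (funext h)
  have hnj0 : 1 ≤ n j0 := Nat.one_le_iff_ne_zero.2 hj0
  set S : ℕ := ∑ j, n j with hS
  have hS1 : 1 ≤ S :=
    le_trans hnj0 (Finset.single_le_sum (fun i _ => Nat.zero_le _) (Finset.mem_univ j0))
  set θ : ℝ := if 0 < b then Real.pi / (2 * n j0) else 0 with hθ
  set ω : ℂ := Complex.exp (θ * Complex.I) with hω
  have habsω : ‖ω‖ = 1 := Complex.norm_exp_ofReal_mul_I θ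
  have hωpow : ω ^ (2 * n j0) = if 0 < b then -1 else 1 := by
    rw [hω, ← Complex.exp_nat_mul]
    split_ifs with hb'
    · have hne : (n j0 : ℂ) ≠ 0 := Nat.cast_ne_zero.2 hj0
      have : ((2 * n j0 : ℕ) : ℂ) * (↑θ * Complex.I) = Real.pi * Complex.I := by
        simp only [hθ, if_pos hb']
        push_cast
        field_simp
      rw [this, Complex.exp_pi_mul_I]
    · simp only [hθ, if_neg hb']
      simp
  set A : ℝ := max 0 (Real.log C) + 1 + (M + L) * N with hA
  have hA0 : 0 < A := by positivity
  set t : ℝ := max 1 (A / |b|) with ht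
  have ht1 : (1 : ℝ) ≤ t := le_max_left _ _
  have ht0 : (0 : ℝ) < t := lt_of_lt_of_le one_pos ht1
  have hb0 : (0 : ℝ) < |b| := abs_pos.2 hb
  have htb : A ≤ |b| * t := by
    have h := le_max_right 1 (A / |b|)
    rw [div_le_iff₀ hb0] at h
    linarith [h.trans_eq (mul_comm t |b|)]
  set z : EuclideanSpace ℂ (Fin N) := WithLp.toLp 2 (fun j => if j = j0 then ω * t else (t : ℂ)) with hz
  have hzj : ∀ j, z j = if j = j0 then ω * t else (t : ℂ) := fun j => rfl
  refine ⟨z, ?_⟩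
  have habsz : ∀ j, ‖z j‖ = t := by
    intro j
    rw [hzj j]
    split_ifs with h <;> simp [habsω, abs_of_pos ht0]
  have hprod : ∏ j, z j ^ (2 * n j) = (if 0 < b then (-1 : ℂ) else 1) * (t : ℂ) ^ (2 * S) := by
    have key : ∀ j : Fin N, z j ^ (2 * n j)
        = (if j = j0 then ω ^ (2 * n j) else 1) * (t : ℂ) ^ (2 * n j) := by
      intro j
      rw [hzj j]
      split_ifs with h <;> simp [mul_pow]
    rw [Finset.prod_congr rfl (fun j _ => key j), Finset.prod_mul_distrib]
    rw [Finset.prod_ite_eq' Finset.univ j0 (fun j => ω ^ (2 * n j))]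
    simp only [Finset.mem_univ, if_pos, hωpow]
    congr 1
    rw [Finset.prod_pow_eq_pow_sum, ← Finset.mul_sum]
  have hre : -(b : ℂ) * ∏ j, z j ^ (2 * n j) = ((|b| * t ^ (2 * S) : ℝ) : ℂ) := by
    rw [hprod]
    split_ifs with hb'
    · rw [abs_of_pos hb']; push_cast; ring
    · rw [abs_of_neg (lt_of_le_of_ne (not_lt.1 hb') hb)]; push_cast; ring
  rw [hre, Complex.norm_exp, Complex.ofReal_re]
  -- norm bounds
  have hznorm : ‖z‖ ≤ N * t := by
    rw [EuclideanSpace.norm_eq]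
    have hsum : ∑ j, ‖z j‖ ^ 2 = N * t ^ 2 := by
      have h' : ∀ j : Fin N, ‖z j‖ ^ 2 = t ^ 2 := fun j => by
        rw [habsz j]
      rw [Finset.sum_congr rfl (fun j _ => h' j)]
      simp [Finset.sum_const, Finset.card_univ, nsmul_eq_mul]
    rw [hsum]
    have h1 : (N : ℝ) * t ^ 2 ≤ (N * t) ^ 2 := by
      have hN1 : (1 : ℝ) ≤ N := by exact_mod_cast hN
      nlinarith
    calc Real.sqrt (N * t ^ 2) ≤ Real.sqrt ((N * t) ^ 2) := Real.sqrt_le_sqrt h1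
      _ = N * t := Real.sqrt_sq (by positivity)
  have him : ∑ j, |(z j).im| ≤ N * t := by
    have h' : ∀ j : Fin N, |(z j).im| ≤ t := fun j =>
      (Complex.abs_im_le_norm _).trans_eq (habsz j)
    calc ∑ j, |(z j).im| ≤ ∑ _j : Fin N, t := Finset.sum_le_sum fun j _ => h' j
      _ = N * t := by simp [Finset.sum_const, Finset.card_univ, nsmul_eq_mul]
  have h1z : (0 : ℝ) < 1 + ‖z‖ := by positivity
  have hpow : (1 + ‖z‖) ^ M ≤ Real.exp (M * (N * t)) := by
    rw [Real.rpow_def_of_pos h1z]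
    apply Real.exp_le_exp.2
    have hlog : Real.log (1 + ‖z‖) ≤ N * t := by
      have h1 := Real.log_le_sub_one_of_pos h1z
      have h2 : (0:ℝ) ≤ ‖z‖ := norm_nonneg _
      linarith
    calc Real.log (1 + ‖z‖) * M ≤ (N * t) * M :=
          mul_le_mul_of_nonneg_right hlog hM
      _ = M * (N * t) := by ring
  have hexpL : Real.exp (L * ∑ j, |(z j).im|) ≤ Real.exp (L * (N * t)) :=
    Real.exp_le_exp.2 (mul_le_mul_of_nonneg_left him hL)
  have hCeq : C ≤ Real.exp (Real.log C) := (Real.exp_log hC).symm.le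
  have hrhs : C * (1 + ‖z‖) ^ M * Real.exp (L * ∑ j, |(z j).im|)
      ≤ Real.exp (Real.log C + M * (N * t) + L * (N * t)) := by
    have h2 : (0:ℝ) ≤ (1 + ‖z‖) ^ M := (Real.rpow_pos_of_pos h1z M).le
    calc C * (1 + ‖z‖) ^ M * Real.exp (L * ∑ j, |(z j).im|)
        ≤ Real.exp (Real.log C) * Real.exp (M * (N * t)) * Real.exp (L * (N * t)) := by
          apply mul_le_mul (mul_le_mul hCeq hpow h2 (Real.exp_pos _).le) hexpL
            (Real.exp_pos _).le (by positivity)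
      _ = Real.exp (Real.log C + M * (N * t) + L * (N * t)) := by
          rw [← Real.exp_add, ← Real.exp_add]
  have hkey : Real.log C + M * (N * t) + L * (N * t) < |b| * t ^ (2 * S) := by
    have h2S : t ^ 2 ≤ t ^ (2 * S) := pow_le_pow_right₀ ht1 (by omega)
    have hb2 : |b| * t ^ 2 ≤ |b| * t ^ (2 * S) :=
      mul_le_mul_of_nonneg_left h2S hb0.le
    have hAt : A * t ≤ |b| * t ^ 2 := by
      have e : |b| * t * t = |b| * t ^ 2 := by ring
      linarith [mul_le_mul_of_nonneg_right htb ht0.le, e]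
    have hlogC : Real.log C ≤ max 0 (Real.log C) := le_max_right _ _
    have hmax0 : (0:ℝ) ≤ max 0 (Real.log C) := le_max_left _ _
    have hMLN : (0:ℝ) ≤ (M + L) * N :=
      mul_nonneg (add_nonneg hM hL) (Nat.cast_nonneg N)
    have hAtexp : Real.log C + (M + L) * N * t + 1 ≤ A * t := by
      rw [hA]
      have e1 : (max 0 (Real.log C) + 1) * 1 ≤ (max 0 (Real.log C) + 1) * t :=
        mul_le_mul_of_nonneg_left ht1 (by positivity)
      have e3 : (max 0 (Real.log C) + 1 + (M + L) * N) * t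
          = (max 0 (Real.log C) + 1) * t + (M + L) * N * t := by ring
      rw [mul_one] at e1
      linarith
    have e4 : M * (N * t) + L * (N * t) = (M + L) * N * t := by ring
    linarith
  exact lt_of_le_of_lt hrhs (Real.exp_lt_exp.2 hkey)
end

section
/- Let N ≥ 1, let b be a nonzero real number, and let n : {1,…,N} → ℕ be a multi-index with total degree ∑_{j=1}^N (2n_j + 1) ≥ 2. Define the entire function F : ℂ^N → ℂ by F(z) = exp(−i·b·∏_{j=1}^N z_j^{2n_j+1}). Then F violates every Paley–Wiener bound: for all constants C > 0, M ≥ 0 and L ≥ 0 there exists z ∈ ℂ^N such that |F(z)| > C·(1 + ‖z‖)^M · exp(L·∑_{j=1}^N |Im z_j|). (Consequently, the inverse Fourier transform of k ↦ exp(−i·b·k^{2n+1}) cannot be a distribution of compact support.) -/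
open Complex Finset

/-- The entire function `F(z) = exp (-i b ∏ z_j^{2 n_j + 1})`, with `b ≠ 0` and total
degree `∑ (2 n_j + 1) ≥ 2`, violates every Paley–Wiener bound. -/
theorem stmt_5 (N : ℕ) (hN : 1 ≤ N) (b : ℝ) (hb : b ≠ 0)
    (n : Fin N → ℕ) (hdeg : 2 ≤ ∑ j : Fin N, (2 * n j + 1)) :
    ∀ C M L : ℝ, 0 < C → 0 ≤ M → 0 ≤ L →
      ∃ z : EuclideanSpace ℂ (Fin N),
        ‖Complex.exp (-(Complex.I * (b : ℂ)) *
            ∏ j : Fin N, z j ^ (2 * n j + 1))‖ >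
          C * (1 + ‖z‖) ^ M * Real.exp (L * ∑ j : Fin N, |(z j).im|) := by
  intro C M L hC hM hL
  have hb' : 0 < |b| := abs_pos.mpr hb
  set j0 : Fin N := ⟨0, hN⟩ with hj0
  set m : ℕ := n j0 with hm
  set D : ℕ := ∑ j : Fin N, (2 * n j + 1) with hD
  set e : ℝ := (|b| / b) * (-1) ^ m with he
  have hsq : ((-1:ℝ) ^ m) ^ 2 = 1 := by
    rw [← pow_mul, mul_comm, pow_mul]; norm_num
  have he2 : e ^ 2 = 1 := by
    rw [he, mul_pow, div_pow, _root_.sq_abs, div_self (pow_ne_zero 2 hb), one_mul, hsq]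
  have hbe : b * e * (-1) ^ m = |b| := by
    rw [he]
    calc b * (|b| / b * (-1) ^ m) * (-1) ^ m = |b| * (b / b) * ((-1:ℝ) ^ m) ^ 2 := by ring
      _ = |b| := by rw [div_self hb, hsq]; ring
  have habse : |e| = 1 := by
    have h0 : (|e| - 1) * (|e| + 1) = 0 := by nlinarith [_root_.sq_abs e, he2]
    rcases mul_eq_zero.mp h0 with h | h
    · linarith
    · linarith [abs_nonneg e]
  -- choose t
  set K : ℝ := (M + L) * N with hK
  have hK0 : 0 ≤ K := by positivity
  set A : ℝ := max (Real.log C) 0 + 1 with hA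
  have hA1 : 1 ≤ A := by simp [hA, le_max_right]
  set t : ℝ := max 1 ((K + A) / |b|) with ht
  have ht1 : 1 ≤ t := le_max_left _ _
  have ht0 : 0 < t := lt_of_lt_of_le one_pos ht1
  have hbt : K + A ≤ |b| * t := by
    rw [mul_comm]
    exact (div_le_iff₀ hb').mp (le_max_right _ _)
  have hkey : K * t + Real.log C < |b| * t ^ 2 := by
    have h1 : (K + A) * t ≤ |b| * t ^ 2 := by nlinarith
    have h2 : K * t + A ≤ (K + A) * t := by nlinarith
    have h3 : Real.log C < A := lt_of_le_of_lt (le_max_left _ _) (by linarith [le_max_right (Real.log C) (0:ℝ)])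
    nlinarith
  -- the point
  set z : EuclideanSpace ℂ (Fin N) := WithLp.toLp 2 (fun j => if j = j0 then ((t * e : ℝ) : ℂ) * Complex.I else (t : ℝ)) with hz
  refine ⟨z, ?_⟩
  -- product computation
  have hzj0 : z j0 ^ (2 * m + 1) = ((t ^ (2 * m + 1) * e * (-1) ^ m : ℝ) : ℂ) * Complex.I := by
    simp only [hz, PiLp.toLp_apply, if_pos rfl, if_true]
    rw [mul_pow, ← Complex.ofReal_pow, mul_pow, pow_succ (Complex.I) (2*m), pow_mul, Complex.I_sq]
    have : e ^ (2 * m + 1) = e := by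
      rw [pow_succ, pow_mul, he2, one_pow, one_mul]
    push_cast [this]
    ring
  have hprod : ∏ j : Fin N, z j ^ (2 * n j + 1)
      = ((|b| / b * t ^ D : ℝ) : ℂ) * Complex.I := by
    rw [← Finset.mul_prod_erase Finset.univ _ (Finset.mem_univ j0)]
    have hrest : ∏ j ∈ Finset.univ.erase j0, z j ^ (2 * n j + 1)
        = ((t ^ (∑ j ∈ Finset.univ.erase j0, (2 * n j + 1)) : ℝ) : ℂ) := by
      push_cast
      rw [← Finset.prod_pow_eq_pow_sum]
      refine Finset.prod_congr rfl fun j hj => ?_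
      rw [hz]
      simp [Finset.mem_erase.mp hj |>.1]
    rw [hzj0, hrest]
    have hsum : (2 * m + 1) + ∑ j ∈ Finset.univ.erase j0, (2 * n j + 1) = D := by
      rw [hD, hm, ← Finset.add_sum_erase Finset.univ _ (Finset.mem_univ j0)]
    have her : t ^ (2 * m + 1) * e * (-1) ^ m * t ^ (∑ j ∈ Finset.univ.erase j0, (2 * n j + 1))
        = |b| / b * t ^ ((2 * m + 1) + ∑ j ∈ Finset.univ.erase j0, (2 * n j + 1)) := by
      rw [he, pow_add]
      linear_combination (|b| / b * t ^ (2 * m + 1) * t ^ (∑ j ∈ Finset.univ.erase j0, (2 * n j + 1))) * hsq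
    rw [← hsum, mul_right_comm, ← Complex.ofReal_mul, her]
  -- LHS value
  have hre : (-(Complex.I * (b : ℂ)) * ∏ j : Fin N, z j ^ (2 * n j + 1)) = ((|b| * t ^ D : ℝ) : ℂ) := by
    rw [hprod]
    have : -(Complex.I * (b : ℂ)) * (((|b| / b * t ^ D : ℝ) : ℂ) * Complex.I)
        = ((b * (|b| / b) * t ^ D : ℝ) : ℂ) * (-(Complex.I * Complex.I)) := by
      push_cast; ring
    rw [this, Complex.I_mul_I]
    have : b * (|b| / b) = |b| := by field_simp
    rw [this]
    push_cast; ring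
  have hLHS : ‖Complex.exp (-(Complex.I * (b : ℂ)) *
      ∏ j : Fin N, z j ^ (2 * n j + 1))‖ = Real.exp (|b| * t ^ D) := by
    rw [hre, Complex.norm_exp, Complex.ofReal_re]
  -- norm bound
  have hnormj : ∀ j, ‖z j‖ = t := by
    intro j
    rw [hz]
    by_cases h : j = j0 <;> simp [h, abs_mul, habse, abs_of_pos ht0, Complex.norm_real]
  have hnorm : ‖z‖ ≤ N * t := by
    rw [EuclideanSpace.norm_eq]
    have : ∑ j : Fin N, ‖z j‖ ^ 2 = N * t ^ 2 := by
      simp [hnormj]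
    rw [this]
    calc Real.sqrt (N * t ^ 2) ≤ Real.sqrt ((N * t) ^ 2) := by
          apply Real.sqrt_le_sqrt; nlinarith [(by exact_mod_cast hN : (1:ℝ) ≤ (N:ℝ))]
      _ = N * t := Real.sqrt_sq (by positivity)
  -- imaginary part bound
  have hIm : ∑ j : Fin N, |(z j).im| ≤ N * t := by
    calc ∑ j : Fin N, |(z j).im| ≤ ∑ j : Fin N, t := by
          refine Finset.sum_le_sum fun j _ => ?_
          calc |(z j).im| ≤ ‖z j‖ := Complex.abs_im_le_norm _
            _ = t := hnormj j
      _ = N * t := by simp [mul_comm]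
  -- final estimate
  rw [hLHS]
  have hNt0 : 0 ≤ (N : ℝ) * t := by positivity
  have h1 : (1 + ‖z‖) ^ M ≤ Real.exp (M * (N * t)) := by
    calc (1 + ‖z‖) ^ M ≤ Real.exp (N * t) ^ M := by
          apply Real.rpow_le_rpow (by positivity) _ hM
          calc 1 + ‖z‖ ≤ 1 + N * t := by linarith
            _ ≤ Real.exp (N * t) := by linarith [Real.add_one_le_exp ((N : ℝ) * t)]
      _ = Real.exp (M * (N * t)) := by
          rw [← Real.exp_mul, mul_comm]
  have h2 : Real.exp (L * ∑ j : Fin N, |(z j).im|) ≤ Real.exp (L * (N * t)) := by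
    apply Real.exp_le_exp.mpr
    exact mul_le_mul_of_nonneg_left hIm hL
  have h3 : C * (1 + ‖z‖) ^ M * Real.exp (L * ∑ j : Fin N, |(z j).im|)
      ≤ Real.exp (Real.log C + K * t) := by
    rw [Real.exp_add]
    have hCle : C = Real.exp (Real.log C) := (Real.exp_log hC).symm
    calc C * (1 + ‖z‖) ^ M * Real.exp (L * ∑ j : Fin N, |(z j).im|)
        ≤ C * Real.exp (M * (N * t)) * Real.exp (L * (N * t)) := by
          apply mul_le_mul (mul_le_mul_of_nonneg_left h1 hC.le) h2 (Real.exp_pos _).le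
          positivity
      _ = Real.exp (Real.log C) * Real.exp (K * t) := by
          have hKt : M * (↑N * t) + L * (↑N * t) = K * t := by rw [hK]; ring
          rw [mul_assoc, ← Real.exp_add, hKt, ← hCle]
  have h4 : Real.exp (Real.log C + K * t) < Real.exp (|b| * t ^ 2) := by
    apply Real.exp_lt_exp.mpr; linarith
  have h5 : Real.exp (|b| * t ^ 2) ≤ Real.exp (|b| * t ^ D) := by
    apply Real.exp_le_exp.mpr
    apply mul_le_mul_of_nonneg_left _ (abs_nonneg b)
    exact pow_le_pow_right₀ ht1 hdeg
  calc C * (1 + ‖z‖) ^ M * Real.exp (L * ∑ j : Fin N, |(z j).im|)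
      ≤ Real.exp (Real.log C + K * t) := h3
    _ < Real.exp (|b| * t ^ 2) := h4
    _ ≤ Real.exp (|b| * t ^ D) := h5
end

section
/- Let N ≥ 1 and let P be a polynomial in N complex variables of total degree at least 2. Then there is no integrable function f : ℝ^N → ℂ with compact support whose Fourier transform satisfies 𝓕f(k) = exp(−P(k)) for all k ∈ ℝ^N. (That is, if f₁ = 𝓕^{−1}{exp(−P)} is a Schwartz function, then f₁ cannot have compact support.) -/
open MeasureTheory MvPolynomial Polynomial Complex




lemma aux_eval_zero : ∀ (n : ℕ) (p : MvPolynomial (Fin n) ℂ),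
    (∀ v : Fin n → ℝ, MvPolynomial.eval (fun j => (v j : ℂ)) p = 0) → p = 0 := by
  intro n
  induction n with
  | zero =>
    intro p h
    obtain ⟨a, rfl⟩ := MvPolynomial.C_surjective (Fin 0) p
    have := h (fun j => 0)
    rw [MvPolynomial.eval_C] at this
    rw [this, map_zero]
  | succ n ih =>
    intro p h
    have key : ∀ i, (MvPolynomial.finSuccEquiv ℂ n p).coeff i = 0 := by
      intro i
      apply ih
      intro v
      have hg : Polynomial.map (MvPolynomial.eval (fun j => (v j : ℂ)))
          (MvPolynomial.finSuccEquiv ℂ n p) = 0 := by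
        apply Polynomial.eq_zero_of_infinite_isRoot
        apply Set.Infinite.mono (s := Set.range (Complex.ofReal))
        · rintro _ ⟨y, rfl⟩
          have := h (Fin.cons y v)
          rw [show (fun j => ((Fin.cons y v : Fin (n+1) → ℝ) j : ℂ))
              = Fin.cons (y : ℂ) (fun j => (v j : ℂ)) from ?_] at this
          · exact (MvPolynomial.eval_eq_eval_mv_eval' _ _ _).symm.trans this
          · ext j
            refine Fin.cases ?_ ?_ j <;> simp
        · exact Set.infinite_range_of_injective Complex.ofReal_injective
      have := congrArg (fun q => Polynomial.coeff q i) hg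
      simpa using this
    have : MvPolynomial.finSuccEquiv ℂ n p = 0 := Polynomial.ext fun i => by simp [key i]
    exact (map_eq_zero_iff _ (AlgEquiv.injective _)).mp this

lemma aux_exists {n : ℕ} {p : MvPolynomial (Fin n) ℂ} (hp : p ≠ 0) :
    ∃ v : Fin n → ℝ, MvPolynomial.eval (fun j => (v j : ℂ)) p ≠ 0 := by
  by_contra hc
  push_neg at hc
  exact hp (aux_eval_zero n p hc)




lemma coeff_aeval_line {N : ℕ} (P : MvPolynomial (Fin N) ℂ) (v : Fin N → ℝ) (d : ℕ) :
    (MvPolynomial.aeval (fun j => Polynomial.C ((v j : ℂ)) * Polynomial.X) P).coeff d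
      = MvPolynomial.eval (fun j => (v j : ℂ)) (MvPolynomial.homogeneousComponent d P) := by
  conv_lhs => rw [P.as_sum]
  rw [map_sum, Polynomial.finset_sum_coeff]
  rw [MvPolynomial.homogeneousComponent_apply, map_sum, Finset.sum_filter]
  refine Finset.sum_congr rfl ?_
  intro m _
  have hprod : (m.prod fun j k => (Polynomial.C ((v j : ℂ)) * Polynomial.X) ^ k)
      = Polynomial.C (m.prod fun j k => ((v j : ℂ)) ^ k) * Polynomial.X ^ m.degree := by
    rw [Finsupp.prod, Finsupp.prod, Finsupp.degree_apply, map_prod, ← Finset.prod_pow_eq_pow_sum,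
      ← Finset.prod_mul_distrib]
    exact Finset.prod_congr rfl fun j _ => by rw [mul_pow, Polynomial.C_pow]
  rw [MvPolynomial.aeval_monomial, hprod, ← mul_assoc, Polynomial.algebraMap_eq, ← Polynomial.C_mul,
    Polynomial.coeff_C_mul, Polynomial.coeff_X_pow]
  by_cases hd : m.degree = d
  · simp [hd, MvPolynomial.eval_monomial]
  · simp [hd, Ne.symm hd]




lemma norm_exp_mul_le {g : α → ℝ} {f : α → ℂ} {L : ℝ} (hL0 : 0 ≤ L)
    (hL : ∀ a, f a ≠ 0 → |g a| ≤ L) (z : ℂ) (a : α) :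
    ‖Complex.exp (Complex.I * (g a : ℂ) * z) * f a‖
      ≤ Real.exp (L * ‖z‖) * ‖f a‖ := by
  by_cases hf : f a = 0
  · simp [hf]
  · rw [norm_mul, Complex.norm_exp]
    have hre : (Complex.I * (g a : ℂ) * z).re = -(g a * z.im) := by
      simp [Complex.mul_re, Complex.mul_im]
    refine mul_le_mul_of_nonneg_right ?_ (norm_nonneg _)
    refine Real.exp_le_exp.2 ?_
    rw [hre]
    calc -(g a * z.im) ≤ |g a * z.im| := neg_le_abs _
      _ = |g a| * |z.im| := abs_mul _ _
      _ ≤ L * ‖z‖ :=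
        mul_le_mul (hL a hf) (Complex.abs_im_le_norm z) (abs_nonneg _) hL0

lemma entire_aux {α : Type*} [MeasurableSpace α] {μ : Measure α}
    {f : α → ℂ} {g : α → ℝ} (hint : Integrable f μ)
    (hgm : AEStronglyMeasurable g μ) {L : ℝ} (hL0 : 0 ≤ L)
    (hL : ∀ a, f a ≠ 0 → |g a| ≤ L) :
    Differentiable ℂ (fun z => ∫ a, Complex.exp (Complex.I * (g a : ℂ) * z) * f a ∂μ) ∧
    ∀ z : ℂ, ‖∫ a, Complex.exp (Complex.I * (g a : ℂ) * z) * f a ∂μ‖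
      ≤ (∫ a, ‖f a‖ ∂μ) * Real.exp (L * ‖z‖) := by
  have hmeas : ∀ z : ℂ, AEStronglyMeasurable
      (fun a => Complex.exp (Complex.I * (g a : ℂ) * z) * f a) μ := by
    intro z
    exact (Complex.continuous_exp.comp_aestronglyMeasurable
      (((Complex.continuous_ofReal.comp_aestronglyMeasurable hgm).const_mul
        Complex.I).mul_const z)).mul hint.1
  have hintz : ∀ z : ℂ, Integrable
      (fun a => Complex.exp (Complex.I * (g a : ℂ) * z) * f a) μ := by
    intro z
    exact ((hint.norm.const_mul (Real.exp (L * ‖z‖))).mono' (hmeas z)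
      (Filter.Eventually.of_forall fun a => by
        simpa using norm_exp_mul_le hL0 hL z a))
  constructor
  · intro z₀
    have key := hasDerivAt_integral_of_dominated_loc_of_deriv_le (μ := μ)
      (F := fun z a => Complex.exp (Complex.I * (g a : ℂ) * z) * f a)
      (F' := fun z a => Complex.exp (Complex.I * (g a : ℂ) * z) * (Complex.I * (g a : ℂ)) * f a)
      (x₀ := z₀) (s := Metric.ball z₀ 1) (bound := fun a => Real.exp (L * (‖z₀‖ + 1)) * (L * ‖f a‖))
      (Metric.ball_mem_nhds z₀ one_pos) (Filter.Eventually.of_forall fun z => hmeas z) (hintz z₀)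
      ?_ ?_ ((hint.norm.const_mul L).const_mul _) ?_
    · exact key.2.differentiableAt
    · have hIg : AEStronglyMeasurable (fun a => Complex.I * (g a : ℂ)) μ :=
        (Complex.continuous_ofReal.comp_aestronglyMeasurable hgm).const_mul Complex.I
      exact ((Complex.continuous_exp.comp_aestronglyMeasurable
        (hIg.mul_const z₀)).mul hIg).mul hint.1
    · refine Filter.Eventually.of_forall fun a => fun z hz => ?_
      by_cases hf : f a = 0
      · simp [hf]
      · have h1 : ‖Complex.exp (Complex.I * (g a : ℂ) * z) * (Complex.I * (g a : ℂ)) * f a‖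
            = ‖Complex.exp (Complex.I * (g a : ℂ) * z) * f a‖ * |g a| := by
          rw [norm_mul, norm_mul, norm_mul]
          simp [Complex.norm_real]
          ring
        rw [h1]
        have h2 := norm_exp_mul_le hL0 hL z a
        have h3 : ‖z‖ ≤ ‖z₀‖ + 1 := by
          have := mem_ball_iff_norm.mp hz
          calc ‖z‖ = ‖z₀ + (z - z₀)‖ := by rw [add_sub_cancel]
            _ ≤ ‖z₀‖ + ‖z - z₀‖ := norm_add_le _ _
            _ ≤ ‖z₀‖ + 1 := by
                have : ‖z - z₀‖ ≤ 1 := le_of_lt this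
                exact add_le_add le_rfl this
        calc ‖Complex.exp (Complex.I * (g a : ℂ) * z) * f a‖ * |g a|
            ≤ (Real.exp (L * ‖z‖) * ‖f a‖) * L := by
              refine mul_le_mul h2 (hL a hf) (abs_nonneg _) (by positivity)
          _ ≤ Real.exp (L * (‖z₀‖ + 1)) * (L * ‖f a‖) := by
              have : Real.exp (L * ‖z‖) ≤ Real.exp (L * (‖z₀‖ + 1)) :=
                Real.exp_le_exp.2 (mul_le_mul_of_nonneg_left h3 hL0)
              have h5 := mul_le_mul_of_nonneg_right this
                (by positivity : (0:ℝ) ≤ L * ‖f a‖)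
              calc Real.exp (L * ‖z‖) * ‖f a‖ * L
                  = Real.exp (L * ‖z‖) * (L * ‖f a‖) := by ring
                _ ≤ Real.exp (L * (‖z₀‖ + 1)) * (L * ‖f a‖) := h5
    · refine Filter.Eventually.of_forall fun a => fun z _ => ?_
      have h1 : HasDerivAt (fun z : ℂ => Complex.I * (g a : ℂ) * z)
          (Complex.I * (g a : ℂ)) z := by
        simpa using (hasDerivAt_id z).const_mul (Complex.I * (g a : ℂ))
      exact (h1.cexp.mul_const (f a))
  · intro z
    calc ‖∫ a, Complex.exp (Complex.I * (g a : ℂ) * z) * f a ∂μ‖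
        ≤ ∫ a, ‖Complex.exp (Complex.I * (g a : ℂ) * z) * f a‖ ∂μ :=
          norm_integral_le_integral_norm _
      _ ≤ ∫ a, Real.exp (L * ‖z‖) * ‖f a‖ ∂μ := by
          refine integral_mono (hintz z).norm (hint.norm.const_mul _) ?_
          exact fun a => norm_exp_mul_le hL0 hL z a
      _ = (∫ a, ‖f a‖ ∂μ) * Real.exp (L * ‖z‖) := by
          rw [integral_const_mul]; ring




lemma poly_growth_contradiction {q : Polynomial ℂ} (hn2 : 2 ≤ q.natDegree) {B K : ℝ}
    (hK : 0 ≤ K)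
    (hb : ∀ z : ℂ, Real.exp (-(q.eval z).re) ≤ B * Real.exp (K * ‖z‖)) :
    False := by
  set n := q.natDegree with hn
  have hq0 : q ≠ 0 := by
    intro h
    have h2 := hn2
    rw [hn, h, Polynomial.natDegree_zero] at h2
    omega
  set a := q.leadingCoeff with haa
  have ha : a ≠ 0 := Polynomial.leadingCoeff_ne_zero.2 hq0
  have hA : (0:ℝ) < ‖a‖ := by
    simpa using (norm_pos_iff.mpr ha)
  set A := ‖a‖ with hAdef
  set b : ℂ := -((starRingEnd ℂ) a) / (A : ℂ) with hbdef
  have hb0 : b ≠ 0 := by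
    rw [hbdef]
    apply div_ne_zero
    · simpa using ha
    · simpa using hA.ne'
  have habs_b : ‖b‖ = 1 := by
    rw [hbdef, norm_div, norm_neg, Complex.norm_conj, Complex.norm_real, Real.norm_eq_abs,
      _root_.abs_of_pos hA, div_self hA.ne']
  set w : ℂ := Complex.exp (Complex.log b * ((n:ℝ)⁻¹ : ℝ)) with hwdef
  have hwabs : ‖w‖ = 1 := by
    rw [hwdef, Complex.norm_exp]
    have : (Complex.log b * (((n:ℝ)⁻¹ : ℝ) : ℂ)).re = (Complex.log b).re * (n:ℝ)⁻¹ := by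
      simp [Complex.mul_re]
    rw [this, Complex.log_re, habs_b, Real.log_one, zero_mul, Real.exp_zero]
  have hn0 : (n:ℂ) ≠ 0 := by
    have hne : n ≠ 0 := by omega
    exact_mod_cast Nat.cast_ne_zero.2 hne
  have hwn : w ^ n = b := by
    rw [hwdef, ← Complex.exp_nat_mul]
    have : (n : ℂ) * (Complex.log b * (((n:ℝ)⁻¹ : ℝ) : ℂ)) = Complex.log b := by
      push_cast
      field_simp
    rw [this, Complex.exp_log hb0]
  have hawn : a * w ^ n = -(A : ℂ) := by
    rw [hwn, hbdef, mul_div_assoc']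
    rw [mul_neg, Complex.mul_conj]
    rw [show (Complex.normSq a : ℂ) = (A:ℂ) * (A:ℂ) by
      rw [← Complex.ofReal_mul]; norm_cast; rw [Complex.normSq_eq_norm_sq, hAdef]; ring]
    have hAC : (A:ℂ) ≠ 0 := by exact_mod_cast hA.ne'
    field_simp
  set S : ℝ := ∑ j ∈ Finset.range n, ‖q.coeff j‖ with hSdef
  have hS0 : 0 ≤ S := Finset.sum_nonneg fun j _ => norm_nonneg _
  obtain ⟨m, hm⟩ : ∃ m, n = m + 2 := ⟨n - 2, by omega⟩
  have key : ∀ r : ℝ, 1 ≤ r → A * r ^ (m+2) - S * r ^ (m+1) ≤ -(q.eval ((r:ℂ) * w)).re := by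
    intro r hr
    have hr0 : (0:ℝ) ≤ r := le_trans zero_le_one hr
    have habs_rw : ∀ j : ℕ, ‖(((r:ℂ) * w) ^ j)‖ = r ^ j := by
      intro j
      rw [norm_pow, norm_mul, hwabs, mul_one, Complex.norm_real, Real.norm_eq_abs, _root_.abs_of_nonneg hr0]
    have heval : q.eval ((r:ℂ) * w)
        = ∑ j ∈ Finset.range (n + 1), q.coeff j * ((r:ℂ) * w) ^ j := by
      conv_lhs => rw [Polynomial.eval_eq_sum_range]
    rw [heval, Finset.sum_range_succ]
    have htop : (q.coeff n * ((r:ℂ) * w) ^ n).re = -(A * r ^ n) := by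
      have h2 : q.coeff n * ((r:ℂ) * w) ^ n = (((-(A * r ^ n)) : ℝ) : ℂ) := by
        rw [mul_pow]
        rw [show q.coeff n = a from rfl]
        rw [show a * (((r:ℂ)) ^ n * w ^ n) = ((r:ℂ)^n) * (a * w ^ n) by ring, hawn]
        push_cast
        ring
      rw [h2, Complex.ofReal_re]
    rw [Complex.add_re, htop]
    have hsum : (∑ j ∈ Finset.range n, q.coeff j * ((r:ℂ) * w) ^ j).re ≤ S * r ^ (m+1) := by
      rw [Complex.re_sum]
      have hseq : S * r ^ (m+1) = ∑ j ∈ Finset.range n, ‖q.coeff j‖ * r ^ (m+1) := by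
        rw [hSdef, Finset.sum_mul]
      rw [hseq]
      refine Finset.sum_le_sum fun j hj => ?_
      have h1 : (q.coeff j * ((r:ℂ) * w) ^ j).re
          ≤ ‖(q.coeff j * ((r:ℂ) * w) ^ j)‖ := Complex.re_le_norm _
      have h2 : ‖(q.coeff j * ((r:ℂ) * w) ^ j)‖
          ≤ ‖q.coeff j‖ * r ^ (m+1) := by
        rw [norm_mul, habs_rw]
        refine mul_le_mul_of_nonneg_left ?_ (norm_nonneg _)
        refine pow_le_pow_right₀ hr ?_
        have := Finset.mem_range.mp hj
        omega
      linarith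
    have hrn : A * r ^ n = A * r ^ (m+2) := by rw [hm]
    linarith [hrn.ge, hrn.le, hsum]
  have hB : 0 < B := by
    have h := hb 0
    nlinarith [Real.exp_pos (-(q.eval 0).re), Real.exp_pos (K * ‖(0:ℂ)‖)]
  have upper : ∀ r : ℝ, 0 ≤ r → -(q.eval ((r:ℂ) * w)).re ≤ Real.log B + K * r := by
    intro r hr0
    have h := hb ((r:ℂ) * w)
    have habs : ‖((r:ℂ) * w)‖ = r := by
      rw [norm_mul, hwabs, mul_one, Complex.norm_real, Real.norm_eq_abs, _root_.abs_of_nonneg hr0]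
    rw [habs] at h
    have he : B * Real.exp (K * r) = Real.exp (Real.log B + K * r) := by
      rw [Real.exp_add, Real.exp_log hB]
    rw [he] at h
    exact Real.exp_le_exp.1 h
  set r : ℝ := max 1 ((S + K + |Real.log B| + 1) / A) with hrdef
  have hr1 : (1:ℝ) ≤ r := le_max_left _ _
  have hr0 : (0:ℝ) ≤ r := le_trans zero_le_one hr1
  have hAr : S + K + |Real.log B| + 1 ≤ A * r := by
    have h1 : (S + K + |Real.log B| + 1) / A ≤ r := le_max_right _ _
    calc S + K + |Real.log B| + 1 = A * ((S + K + |Real.log B| + 1) / A) := by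
          field_simp
      _ ≤ A * r := mul_le_mul_of_nonneg_left h1 hA.le
  have hlow := key r hr1
  have hup := upper r hr0
  have hpow1 : r ≤ r ^ (m+1) := by
    calc r = r ^ 1 := (pow_one r).symm
      _ ≤ r ^ (m+1) := pow_le_pow_right₀ hr1 (by omega)
  have hstep : r ^ (m+1) * (K + |Real.log B| + 1) ≤ A * r ^ (m+2) - S * r ^ (m+1) := by
    have hh : A * r ^ (m+2) - S * r ^ (m+1) = r ^ (m+1) * (A * r - S) := by ring
    rw [hh]
    refine mul_le_mul_of_nonneg_left ?_ (by positivity)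
    linarith
  have hfin : r * (K + |Real.log B| + 1) ≤ r ^ (m+1) * (K + |Real.log B| + 1) :=
    mul_le_mul_of_nonneg_right hpow1 (by positivity)
  have habs_log : Real.log B ≤ |Real.log B| := le_abs_self _
  nlinarith [hfin, hstep, hlow, hup, hr1, hK, abs_nonneg (Real.log B)]



lemma no_exp_poly {α : Type*} [MeasurableSpace α] {μ : MeasureTheory.Measure α}
    {f : α → ℂ} {g : α → ℝ} (hint : MeasureTheory.Integrable f μ)
    (hgm : MeasureTheory.AEStronglyMeasurable g μ) {L : ℝ} (hL0 : 0 ≤ L)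
    (hL : ∀ a, f a ≠ 0 → |g a| ≤ L) {q : Polynomial ℂ} (hq : 2 ≤ q.natDegree) {c : ℂ}
    (hFT : ∀ t : ℝ, c * (∫ a, Complex.exp (Complex.I * (g a : ℂ) * (t : ℂ)) * f a ∂μ)
      = Complex.exp (-(q.eval (t : ℂ)))) : False := by
  obtain ⟨hdiff, hbound⟩ := entire_aux hint hgm hL0 hL
  set H : ℂ → ℂ := fun z => ∫ a, Complex.exp (Complex.I * (g a : ℂ) * z) * f a ∂μ with hHdef
  have hGdiff : Differentiable ℂ (fun z => c * H z - Complex.exp (-(q.eval z))) :=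
    (hdiff.const_mul c).sub ((q.differentiable).neg.cexp)
  have hfreq : ∃ᶠ z in nhdsWithin (0 : ℂ) {(0 : ℂ)}ᶜ,
      (fun z => c * H z - Complex.exp (-(q.eval z))) z = (fun _ => (0:ℂ)) z := by
    have htendR : Filter.Tendsto (fun m : ℕ => ((m : ℝ) + 1)⁻¹) Filter.atTop (nhds 0) :=
      tendsto_one_div_add_atTop_nhds_zero_nat.congr (by intro m; rw [one_div])
    have htend : Filter.Tendsto (fun m : ℕ => ((((m : ℝ) + 1)⁻¹ : ℝ) : ℂ)) Filter.atTop
        (nhdsWithin (0 : ℂ) {(0 : ℂ)}ᶜ) := by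
      rw [tendsto_nhdsWithin_iff]
      constructor
      · have h2 := (Complex.continuous_ofReal.tendsto 0).comp htendR
        rw [Complex.ofReal_zero] at h2
        exact h2
      · refine Filter.Eventually.of_forall fun m => ?_
        simp only [Set.mem_compl_iff, Set.mem_singleton_iff]
        intro h
        have h3 : ((m : ℝ) + 1)⁻¹ = 0 := by exact_mod_cast h
        have hpos : (0:ℝ) < ((m : ℝ) + 1)⁻¹ := by positivity
        linarith [h3 ▸ hpos]
    refine htend.frequently (Filter.Frequently.of_forall fun m => ?_)
    simp only [hHdef, hFT (((m : ℝ) + 1)⁻¹), sub_self]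
  have heq := (hGdiff.differentiableOn.analyticOnNhd isOpen_univ).eq_of_frequently_eq
    analyticOnNhd_const hfreq
  have hb : ∀ z : ℂ, Real.exp (-(q.eval z).re)
      ≤ (‖c‖ * ∫ a, ‖f a‖ ∂μ) * Real.exp (L * ‖z‖) := by
    intro z
    have h0 := congrFun heq z
    have h1 : Complex.exp (-(q.eval z)) = c * H z := by
      have h2 : c * H z - Complex.exp (-(q.eval z)) = 0 := h0
      linear_combination -h2
    have h2 : Real.exp (-(q.eval z).re) = ‖(Complex.exp (-(q.eval z)))‖ := by
      rw [Complex.norm_exp, Complex.neg_re]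
    rw [h2, h1, norm_mul]
    calc ‖c‖ * ‖H z‖
        ≤ ‖c‖ * ((∫ a, ‖f a‖ ∂μ) * Real.exp (L * ‖z‖)) :=
          mul_le_mul_of_nonneg_left (hbound z) (norm_nonneg _)
      _ = (‖c‖ * ∫ a, ‖f a‖ ∂μ) * Real.exp (L * ‖z‖) := by ring
  exact poly_growth_contradiction hq hL0 hb

open MeasureTheory
open scoped RealInnerProductSpace

/-- If `P` is a polynomial in `N` complex variables of total degree at least `2`, then
there is no compactly supported integrable function whose Fourier transform equals
`exp (-P)` on `ℝ^N`. -/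
theorem stmt_6 (N : ℕ) (hN : 1 ≤ N) (P : MvPolynomial (Fin N) ℂ)
    (hdeg : 2 ≤ P.totalDegree) :
    ¬ ∃ f : EuclideanSpace ℝ (Fin N) → ℂ, Integrable f ∧ HasCompactSupport f ∧
      ∀ k : EuclideanSpace ℝ (Fin N),
        paperFourier f k =
          Complex.exp (-(MvPolynomial.eval (fun j => (k j : ℂ)) P)) := by
  rintro ⟨f, hint, hcs, hFT⟩
  -- support radius
  obtain ⟨R₀, hR₀⟩ := hcs.isBounded.subset_closedBall 0
  set R : ℝ := max R₀ 0 with hRdef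
  have hR : tsupport f ⊆ Metric.closedBall 0 R :=
    hR₀.trans (Metric.closedBall_subset_closedBall (le_max_left _ _))
  have hR0 : 0 ≤ R := le_max_right _ _
  -- the homogeneous top component is nonzero
  have hP0 : P ≠ 0 := by
    intro h
    rw [h, MvPolynomial.totalDegree_zero] at hdeg
    omega
  obtain ⟨m, hmsup, hmdeg⟩ := Finset.exists_mem_eq_sup P.support
    (MvPolynomial.support_nonempty.2 hP0) (fun s => s.sum fun _ e => e)
  have hmdeg' : m.degree = P.totalDegree := by
    rw [MvPolynomial.totalDegree, hmdeg]
    rfl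
  have hcomp : MvPolynomial.homogeneousComponent P.totalDegree P ≠ 0 := by
    intro h
    have h2 := congrArg (MvPolynomial.coeff m) h
    rw [MvPolynomial.coeff_homogeneousComponent, if_pos hmdeg'] at h2
    exact (MvPolynomial.mem_support_iff.mp hmsup) (by simpa using h2)
  obtain ⟨v, hv⟩ := aux_exists hcomp
  -- the univariate restriction q
  set q : Polynomial ℂ :=
    MvPolynomial.aeval (fun j => Polynomial.C ((v j : ℂ)) * Polynomial.X) P with hqdef
  have hqc : q.coeff P.totalDegree ≠ 0 := by
    rw [hqdef, coeff_aeval_line]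
    exact hv
  have hqdeg : 2 ≤ q.natDegree :=
    le_trans hdeg (Polynomial.le_natDegree_of_ne_zero hqc)
  have hqeval : ∀ z : ℂ, q.eval z = MvPolynomial.eval (fun j => (v j : ℂ) * z) P := by
    intro z
    rw [hqdef, MvPolynomial.aeval_def]
    have h := MvPolynomial.eval₂_comp_left (Polynomial.evalRingHom z)
      (algebraMap ℂ (Polynomial ℂ)) (fun j => Polynomial.C ((v j : ℂ)) * Polynomial.X) P
    simp only [Polynomial.coe_evalRingHom] at h
    rw [h]
    have hcomp2 : (Polynomial.evalRingHom z).comp (algebraMap ℂ (Polynomial ℂ))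
        = RingHom.id ℂ := by
      ext a
      simp
    rw [hcomp2]
    have hfun : (Polynomial.eval z ∘ fun j => Polynomial.C ((v j : ℂ)) * Polynomial.X)
        = fun j => (v j : ℂ) * z := by
      funext j
      simp
    rw [hfun]
    rfl
  -- view v as a euclidean vector
  obtain ⟨vE, hvEj⟩ : ∃ vE : EuclideanSpace ℝ (Fin N), ∀ j, vE j = v j :=
    ⟨(WithLp.equiv 2 (Fin N → ℝ)).symm v, fun j => rfl⟩
  have hL0 : (0:ℝ) ≤ ‖vE‖ * R := mul_nonneg (norm_nonneg _) hR0
  have hgm : AEStronglyMeasurable (fun x : EuclideanSpace ℝ (Fin N) => (⟪vE, x⟫ : ℝ)) volume :=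
    (continuous_const.inner continuous_id).aestronglyMeasurable
  have hL : ∀ x : EuclideanSpace ℝ (Fin N), f x ≠ 0 → |(⟪vE, x⟫ : ℝ)| ≤ ‖vE‖ * R := by
    intro x hx
    have hxs : x ∈ tsupport f := subset_tsupport f hx
    have hxR : ‖x‖ ≤ R := by
      have h2 := hR hxs
      rwa [Metric.mem_closedBall, dist_zero_right] at h2
    calc |(⟪vE, x⟫ : ℝ)| ≤ ‖vE‖ * ‖x‖ := abs_real_inner_le_norm _ _
      _ ≤ ‖vE‖ * R := mul_le_mul_of_nonneg_left hxR (norm_nonneg _)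
  -- transfer the Fourier hypothesis to the line through vE
  have hFT' : ∀ t : ℝ, (((2 * Real.pi) ^ (-(N : ℝ) / 2) : ℝ) : ℂ) *
      (∫ x : EuclideanSpace ℝ (Fin N),
        Complex.exp (Complex.I * ((⟪vE, x⟫ : ℝ) : ℂ) * (t : ℂ)) * f x)
      = Complex.exp (-(q.eval (t : ℂ))) := by
    intro t
    have h1 : paperFourier f (t • vE) = (((2 * Real.pi) ^ (-(N : ℝ) / 2) : ℝ) : ℂ) *
        ∫ x : EuclideanSpace ℝ (Fin N),
          Complex.exp (Complex.I * ((⟪vE, x⟫ : ℝ) : ℂ) * (t : ℂ)) * f x := by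
      rw [paperFourier]
      congr 1
      refine integral_congr_ae (Filter.Eventually.of_forall fun x => ?_)
      show Complex.exp (Complex.I * ((⟪t • vE, x⟫ : ℝ) : ℂ)) * f x
          = Complex.exp (Complex.I * ((⟪vE, x⟫ : ℝ) : ℂ) * (t : ℂ)) * f x
      rw [real_inner_smul_left]
      push_cast
      ring_nf
    have h2 : MvPolynomial.eval (fun j => (((t • vE) j : ℝ) : ℂ)) P = q.eval (t : ℂ) := by
      rw [hqeval]
      have h4 : (fun j => (((t • vE) j : ℝ) : ℂ)) = fun j => (v j : ℂ) * (t : ℂ) := by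
        funext j
        have h3 : (t • vE) j = t * vE j := rfl
        rw [h3, hvEj]
        push_cast
        ring
      rw [h4]
    rw [← h1, hFT (t • vE), h2]
  exact no_exp_poly hint hgm hL0 hL hqdeg hFT'
end

section
/- Let a : ℂ → ℂ be an entire function such that F := exp(−a) is of exponential type at most 1, i.e., limsup_{r→∞} (log max_{|z|=r} |exp(−a(z))|)/r ≤ 1. Suppose that for every C > 0 there exist arbitrarily large natural numbers m with max_{|z|=m} |a(z)| > C·exp(m²). Then the entire function z ↦ a(z)·exp(−a(z)) is not of finite exponential type: for every T > 0 there exist arbitrarily large r > 0 with max_{|z|=r} |a(z)·exp(−a(z))| > exp(T·r). -/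
open Filter

/-- maximum modulus of `F` on the circle of radius `r` centered at the origin. -/
noncomputable def maxMod (F : ℂ → ℂ) (r : ℝ) : ℝ :=
  sSup ((fun z => ‖F z‖) '' Metric.sphere (0 : ℂ) r)

/-- A form of the Borel–Carathéodory estimate, via the Schwarz lemma. -/
lemma bc_aux {g : ℂ → ℂ} (hg : Differentiable ℂ g) (hg0 : g 0 = 0) {A R : ℝ}
    (hA : 0 < A) (hR : 0 < R)
    (hRe : ∀ w ∈ Metric.ball (0:ℂ) R, (g w).re ≤ A - 1)
    {z : ℂ} (hz : ‖z‖ ≤ R / 2) :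
    ‖g z‖ ≤ 2 * A := by
  set φ : ℂ → ℂ := fun w => g w / (((2*A : ℝ) : ℂ) - g w) with hφ
  have hden : ∀ w ∈ Metric.ball (0:ℂ) R, (((2*A : ℝ) : ℂ) - g w) ≠ 0 := by
    intro w hw
    have hre : 0 < (((2*A : ℝ) : ℂ) - g w).re := by
      simp only [Complex.sub_re, Complex.ofReal_re]
      linarith [hRe w hw]
    intro h
    rw [h] at hre; simp at hre
  have habslt : ∀ w ∈ Metric.ball (0:ℂ) R,
      ‖g w‖ < ‖((2*A : ℝ) : ℂ) - g w‖ := by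
    intro w hw
    have h2 : (‖g w‖)^2 < (‖((2*A : ℝ) : ℂ) - g w‖)^2 := by
      rw [Complex.sq_norm, Complex.sq_norm, Complex.normSq_apply, Complex.normSq_apply]
      simp only [Complex.sub_re, Complex.sub_im, Complex.ofReal_re, Complex.ofReal_im]
      nlinarith [hRe w hw]
    exact lt_of_pow_lt_pow_left₀ 2 (norm_nonneg _) h2
  have hdiff : DifferentiableOn ℂ φ (Metric.ball (0:ℂ) R) :=
    hg.differentiableOn.div ((differentiable_const _).sub hg).differentiableOn hden
  have hφ0 : φ 0 = 0 := by simp [hφ, hg0]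
  have hmaps : Set.MapsTo φ (Metric.ball (0:ℂ) R) (Metric.ball (φ 0) 1) := by
    intro w hw
    rw [hφ0, mem_ball_zero_iff]
    have := habslt w hw
    have hpos : 0 < ‖((2*A : ℝ) : ℂ) - g w‖ :=
      lt_of_le_of_lt (norm_nonneg _) this
    simp only [hφ, norm_div]
    exact (div_lt_one hpos).mpr this
  have hzball : z ∈ Metric.ball (0:ℂ) R := by
    rw [mem_ball_zero_iff]; linarith
  have hschwarz := Complex.dist_le_div_mul_dist_of_mapsTo_ball hdiff (hmaps.mono_right Metric.ball_subset_closedBall) hzball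
  rw [hφ0, dist_zero_right, dist_zero_right] at hschwarz
  have hφz : ‖φ z‖ ≤ 1/2 := by
    calc ‖φ z‖ ≤ 1 / R * ‖z‖ := hschwarz
    _ ≤ 1 / R * (R / 2) := by
        apply mul_le_mul_of_nonneg_left hz (by positivity)
    _ = 1/2 := by field_simp
  have hd0 := hden z hzball
  have habsd : ‖((2*A : ℝ) : ℂ) - g z‖ ≠ 0 := by
    simpa [sub_eq_zero] using hd0
  have hgz : ‖g z‖ = ‖φ z‖ * ‖((2*A : ℝ) : ℂ) - g z‖ := by
    rw [hφ]; simp only [norm_div]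
    rw [div_mul_cancel₀ _ habsd]
  have habs : ‖g z‖ ≤ 1/2 * ‖((2*A : ℝ) : ℂ) - g z‖ := by
    rw [hgz]
    exact mul_le_mul_of_nonneg_right hφz (norm_nonneg _)
  have htri : ‖((2*A : ℝ) : ℂ) - g z‖ ≤ 2*A + ‖g z‖ := by
    calc ‖((2*A : ℝ) : ℂ) - g z‖
        ≤ ‖((2*A : ℝ) : ℂ)‖ + ‖g z‖ := by
          simpa [sub_eq_add_neg] using
            norm_sub_le (((2*A : ℝ) : ℂ)) (g z)
    _ = 2*A + ‖g z‖ := by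
        rw [Complex.norm_real, Real.norm_eq_abs, abs_of_pos (by linarith)]
  linarith [norm_nonneg (g z)]

/-- If `a` is entire, `exp (-a)` is of exponential type at most `1`, and
`max_{|z|=m} |a(z)| > C exp (m²)` for arbitrarily large `m` (for every `C > 0`), then
`z ↦ a(z) exp (-a(z))` is not of finite exponential type. -/
theorem stmt_7 (a : ℂ → ℂ) (ha : Differentiable ℂ a)
    (htype : Filter.limsup
        (fun r : ℝ => Real.log (maxMod (fun z => Complex.exp (-a z)) r) / r)
        Filter.atTop ≤ 1)
    (hbig : ∀ C : ℝ, 0 < C → ∀ m₀ : ℕ, ∃ m : ℕ, m₀ ≤ m ∧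
      maxMod a (m : ℝ) > C * Real.exp ((m : ℝ) ^ 2)) :
    ∀ T : ℝ, 0 < T → ∀ r₀ : ℝ, ∃ r : ℝ, r₀ < r ∧
      maxMod (fun z => a z * Complex.exp (-a z)) r > Real.exp (T * r) := by
  intro T hT r₀
  by_contra h
  push_neg at h
  set b := T + 1 with hb
  have hb1 : 1 < b := by simp [hb]; linarith
  have hb0 : 0 < b := by linarith
  set r₁ := max r₀ 1 + 1 with hr₁
  have hr₁1 : 1 < r₁ := by
    have := le_max_right r₀ (1:ℝ); simp only [hr₁]; linarith
  have hr₀1 : r₀ < r₁ := by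
    have := le_max_left r₀ (1:ℝ); simp only [hr₁]; linarith
  -- Step 1: pointwise lower bound on Re a for |z| ≥ r₁
  have step1 : ∀ z : ℂ, r₁ ≤ ‖z‖ → (-(a z)).re ≤ b * ‖z‖ := by
    intro z hz
    set r := ‖z‖ with hrdef
    have hr1 : 1 < r := lt_of_lt_of_le hr₁1 hz
    have hrr₀ : r₀ < r := lt_of_lt_of_le hr₀1 hz
    have hmem : z ∈ Metric.sphere (0:ℂ) r := by
      rw [mem_sphere_zero_iff_norm]
    have hbdd : BddAbove ((fun w => ‖a w * Complex.exp (-a w)‖) ''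
        Metric.sphere (0:ℂ) r) := by
      apply IsCompact.bddAbove_image (isCompact_sphere 0 r)
      exact (continuous_norm.comp
        (ha.continuous.mul (Complex.continuous_exp.comp ha.continuous.neg))).continuousOn
    have hle : ‖a z * Complex.exp (-a z)‖ ≤
        maxMod (fun w => a w * Complex.exp (-a w)) r :=
      le_csSup hbdd ⟨z, hmem, rfl⟩
    have hle2 : ‖a z * Complex.exp (-a z)‖ ≤ Real.exp (T * r) :=
      hle.trans (h r hrr₀)
    by_contra hc
    push_neg at hc
    have habsa : b * r ≤ ‖a z‖ := by
      have h1 : |(a z).re| ≤ ‖a z‖ := Complex.abs_re_le_norm _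
      have h2 : (-(a z)).re = -(a z).re := Complex.neg_re _
      have h3 : -(a z).re ≤ |(a z).re| := neg_le_abs _
      linarith
    rw [norm_mul, Complex.norm_exp] at hle2
    have e1 : Real.exp (T * r) ≤ Real.exp (b * r) :=
      Real.exp_le_exp.mpr (by nlinarith)
    have e2 : Real.exp (b * r) < Real.exp ((-a z).re) := Real.exp_lt_exp.mpr (by
      simpa [Complex.neg_re] using hc)
    have hbr1 : 1 ≤ b * r := by nlinarith
    have hrw : ((-a z).re) = (-(a z)).re := by simp
    nlinarith [Real.exp_pos ((-a z).re), Real.exp_pos (b*r),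
      mul_le_mul_of_nonneg_right habsa (le_of_lt (Real.exp_pos ((-a z).re)))]
  -- Step 2: bound on the small ball
  obtain ⟨K, hK⟩ := (isCompact_closedBall (0:ℂ) r₁).exists_bound_of_continuousOn
    ha.continuous.continuousOn
  set K' := max K 0 with hK'
  have hK'0 : 0 ≤ K' := le_max_right _ _
  set c := ‖a 0‖ with hc0
  have hc0' : 0 ≤ c := norm_nonneg _
  -- Step 3: linear bound on maxMod a m
  have step3 : ∀ m : ℕ, 1 ≤ (m:ℝ) →
      maxMod a (m:ℝ) ≤ 4*b*(m:ℝ) + 2*K' + 3*c + 2 := by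
    intro m hm
    set A := 2*b*(m:ℝ) + K' + c + 1 with hA
    have hApos : 0 < A := by nlinarith
    set g : ℂ → ℂ := fun w => a 0 - a w with hg
    have hgdiff : Differentiable ℂ g := (differentiable_const _).sub ha
    have hg0 : g 0 = 0 := sub_self _
    have hRe : ∀ w ∈ Metric.ball (0:ℂ) (2*(m:ℝ)), (g w).re ≤ A - 1 := by
      intro w hw
      have h1 : (g w).re = (a 0).re + (-(a w)).re := by
        simp [hg, Complex.sub_re, Complex.neg_re]; ring
      have h2 : (a 0).re ≤ c := Complex.re_le_norm _
      have habsw : ‖w‖ ≤ 2*(m:ℝ) := by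
        rw [mem_ball_zero_iff] at hw; linarith
      have h3 : (-(a w)).re ≤ 2*b*(m:ℝ) + K' := by
        rcases le_or_gt r₁ (‖w‖) with hcase | hcase
        · have := step1 w hcase
          nlinarith
        · have hwball : w ∈ Metric.closedBall (0:ℂ) r₁ := by
            rw [Metric.mem_closedBall, Complex.dist_eq, sub_zero]; linarith
          have h4 := hK w hwball
          have h5 : (-(a w)).re ≤ ‖a w‖ := by
            rw [Complex.neg_re]
            linarith [neg_le_abs ((a w).re), Complex.abs_re_le_norm (a w)]
          have h6 : ‖a w‖ ≤ K := by
            exact h4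
          have h7 : K ≤ K' := le_max_left _ _
          nlinarith
      linarith
    have hball : ∀ z ∈ Metric.sphere (0:ℂ) (m:ℝ),
        ‖a z‖ ≤ 4*b*(m:ℝ) + 2*K' + 3*c + 2 := by
      intro z hzm
      have hzabs : ‖z‖ = (m:ℝ) := by
        rwa [mem_sphere_zero_iff_norm] at hzm
      have hz2 : ‖z‖ ≤ (2*(m:ℝ))/2 := by rw [hzabs]; linarith
      have hbc := bc_aux hgdiff hg0 hApos (by linarith : (0:ℝ) < 2*(m:ℝ)) hRe hz2
      have haz : a z = a 0 - g z := by simp [hg]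
      have : ‖a z‖ ≤ c + ‖g z‖ := by
        rw [haz]
        calc ‖a 0 - g z‖ ≤ ‖a 0‖ + ‖g z‖ := by
              simpa using norm_sub_le (a 0) (g z)
        _ = c + ‖g z‖ := rfl
      simp only [hA] at hbc
      linarith
    apply Real.sSup_le
    · rintro x ⟨z, hzs, rfl⟩; exact hball z hzs
    · nlinarith
  -- Step 4: contradiction with hbig
  obtain ⟨m, hmge, hmbig⟩ := hbig 1 one_pos (⌈max r₁ (4*b + 2*K' + 3*c + 2)⌉₊ + 1)
  have hmD : max r₁ (4*b + 2*K' + 3*c + 2) + 1 ≤ (m:ℝ) := by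
    have h1 := Nat.le_ceil (max r₁ (4*b + 2*K' + 3*c + 2))
    have h2 : ((⌈max r₁ (4*b + 2*K' + 3*c + 2)⌉₊ + 1 : ℕ) : ℝ) ≤ (m:ℝ) :=
      Nat.cast_le.mpr hmge
    push_cast at h2; linarith
  have hm1 : 1 ≤ (m:ℝ) := by
    have := le_max_left r₁ (4*b + 2*K' + 3*c + 2); linarith
  have hmD2 : 4*b + 2*K' + 3*c + 2 ≤ (m:ℝ) := by
    have := le_max_right r₁ (4*b + 2*K' + 3*c + 2); linarith
  have h1 := step3 m hm1
  have h2 : (m:ℝ)^2 + 1 ≤ Real.exp ((m:ℝ)^2) := Real.add_one_le_exp _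
  have h3 : 4*b*(m:ℝ) + 2*K' + 3*c + 2 ≤ (m:ℝ)^2 := by nlinarith
  rw [one_mul] at hmbig
  linarith
end
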